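/- arXiv:2503.20487 — 6 statements merged into one kernel-verified Lean document; each statement's English description precedes it below -/
import Mathlib

section
/- Let ξ, ξ_1, ξ_2, … be i.i.d. ℕ-valued random variables, ξ̄_n = max_{1≤i≤n} ξ_i, and let a_n = max{k ≥ 0 : P(ξ ≥ k) ≥ 1/n}. If ∑_{n≥1} P(ξ ≥ a_n + l) < ∞ for a fixed integer l, then P(ξ̄_n ≥ a_n + l infinitely often) = 0. -/
open MeasureTheory ProbabilityTheory Filter

/-- If `∑ₙ P(ξ ≥ aₙ + l) < ∞` then `P(ξ̄ₙ ≥ aₙ + l  i.o.) = 0`. -/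
theorem max_ge_a_add_l_io_zero {Ω : Type*} [MeasureSpace Ω]
    [IsProbabilityMeasure (ℙ : Measure Ω)] (ξ : ℕ → Ω → ℕ)
    (hmeas : ∀ i, Measurable (ξ i))
    (hindep : iIndepFun ξ ℙ)
    (hident : ∀ i, IdentDistrib (ξ i) (ξ 0) ℙ ℙ)
    (hpos : ∀ k : ℕ, 0 < ℙ {ω | ξ 0 ω = k})
    (a : ℕ → ℕ)
    (ha : ∀ n : ℕ, 1 ≤ n →
      IsGreatest {k : ℕ | 1 / (n : ℝ) ≤ (ℙ {ω | k ≤ ξ 0 ω}).toReal} (a n))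
    (l : ℤ)
    (hsum : ∑' n : ℕ, ℙ {ω | (a n : ℤ) + l ≤ (ξ 0 ω : ℤ)} ≠ ⊤) :
    ℙ (limsup (fun n => {ω | (a n : ℤ) + l ≤ ((Finset.range n).sup fun i => ξ i ω : ℕ)})
        atTop) = 0 := by
  -- tail probabilities are positive
  have htail : ∀ K : ℕ, 0 < (ℙ {ω | K ≤ ξ 0 ω}).toReal := by
    intro K
    have h1 : 0 < ℙ {ω | K ≤ ξ 0 ω} :=
      lt_of_lt_of_le (hpos K) (measure_mono fun ω (h : ξ 0 ω = K) => h.ge)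
    exact ENNReal.toReal_pos h1.ne' (measure_ne_top _ _)
  -- a is monotone on [1, ∞)
  have hmono : ∀ {n m : ℕ}, 1 ≤ n → n ≤ m → a n ≤ a m := by
    intro n m hn hnm
    have hm : 1 ≤ m := hn.trans hnm
    refine (ha m hm).2 ?_
    show 1 / (m : ℝ) ≤ _
    refine le_trans ?_ (ha n hn).1
    exact one_div_le_one_div_of_le (by exact_mod_cast hn) (by exact_mod_cast hnm)
  -- a tends to infinity
  have hatop : Filter.Tendsto a atTop atTop := by
    rw [tendsto_atTop_atTop]
    intro K
    obtain ⟨N, hN⟩ := exists_nat_ge (1 / (ℙ {ω | K ≤ ξ 0 ω}).toReal)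
    refine ⟨max N 1, fun n hn => ?_⟩
    have hn1 : 1 ≤ n := le_trans (le_max_right _ _) hn
    refine (ha n hn1).2 ?_
    show 1 / (n : ℝ) ≤ _
    have hNn : (N : ℝ) ≤ n := by exact_mod_cast le_trans (le_max_left _ _) hn
    have hnpos : (0 : ℝ) < n := by exact_mod_cast hn1
    exact (one_div_le hnpos (htail K)).mpr (hN.trans hNn)
  -- the single-variable events
  set B : ℕ → Set Ω := fun n => {ω | (a n : ℤ) + l ≤ (ξ n ω : ℤ)} with hB
  have hBeq : ∀ n, ℙ (B n) = ℙ {ω | (a n : ℤ) + l ≤ (ξ 0 ω : ℤ)} := by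
    intro n
    have : MeasurableSet {x : ℕ | (a n : ℤ) + l ≤ (x : ℤ)} := by
      exact .of_discrete
    simpa using (hident n).measure_mem_eq this
  have hzero : ℙ (limsup B atTop) = 0 := by
    refine measure_limsup_atTop_eq_zero ?_
    rw [show (fun i => ℙ (B i)) = fun i => ℙ {ω | (a i : ℤ) + l ≤ (ξ 0 ω : ℤ)} from
      funext hBeq] at *
    exact hsum
  refine measure_mono_null ?_ hzero
  intro ω hω
  rw [mem_limsup_iff_frequently_mem, frequently_atTop] at hω ⊢
  intro N
  -- bound ξ_i ω for i ≤ N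
  set C : ℕ := (Finset.range (N + 2)).sup fun i => ξ i ω with hC
  set t : ℕ := C + 1 + l.natAbs with ht
  obtain ⟨M0, hM0⟩ := (tendsto_atTop_atTop.mp hatop) t
  obtain ⟨n, hnM, hn⟩ := hω (max M0 (N + 1))
  have hn1 : N + 1 ≤ n := le_trans (le_max_right _ _) hnM
  have hat : t ≤ a n := hM0 n (le_trans (le_max_left _ _) hnM)
  -- the max event at n
  have hnpos : 0 < n := lt_of_lt_of_le (Nat.succ_pos N) hn1
  obtain ⟨k, hkmem, hkeq⟩ := Finset.exists_mem_eq_sup (Finset.range n)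
    ⟨0, Finset.mem_range.mpr hnpos⟩ fun i => ξ i ω
  have hkn : k < n := Finset.mem_range.mp hkmem
  have hξk : (a n : ℤ) + l ≤ (ξ k ω : ℤ) := by
    have := hn
    simp only [Set.mem_setOf_eq] at this
    rw [hkeq] at this
    exact this
  -- ξ k ω > C, hence k > N
  have hCk : (C : ℤ) < (ξ k ω : ℤ) := by
    have h1 : (C : ℤ) + 1 ≤ (a n : ℤ) + l := by
      have h2 : (t : ℤ) ≤ (a n : ℤ) := by exact_mod_cast hat
      have h3 : (C : ℤ) + 1 + l.natAbs = (t : ℤ) := by push_cast [ht]; ring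
      have h4 : -(l.natAbs : ℤ) ≤ l := by
        rcases Int.natAbs_eq l with h | h <;> omega
      omega
    omega
  have hkN2 : N + 2 ≤ k := by
    by_contra hcon
    push_neg at hcon
    have hle : ξ k ω ≤ C :=
      Finset.le_sup (f := fun i => ξ i ω) (Finset.mem_range.mpr hcon)
    have : (ξ k ω : ℤ) ≤ (C : ℤ) := by exact_mod_cast hle
    omega
  have hkN : N ≤ k := by omega
  refine ⟨k, hkN, ?_⟩
  show (a k : ℤ) + l ≤ (ξ k ω : ℤ)
  have hak : a k ≤ a n := hmono (by omega) hkn.le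
  calc (a k : ℤ) + l ≤ (a n : ℤ) + l := by
        have : (a k : ℤ) ≤ a n := by exact_mod_cast hak
        omega
    _ ≤ _ := hξk
end

section
/- Let ξ, ξ_1, ξ_2, … be i.i.d. ℕ-valued random variables with all point masses positive, ξ̄_n = max_{1≤i≤n} ξ_i, R(n) = -ln P(ξ ≥ n), r(n) = R(n) - R(n-1), a_n = max{k : P(ξ ≥ k) ≥ 1/n}. If r is monotone with r(n) → ∞, then for l ∈ {0, 1}, P(ξ̄_n = a_n + l infinitely often) = 1. -/
open MeasureTheory ProbabilityTheory Filter

private lemma pow_mul_le_one_aux {p : ℝ} (hp0 : 0 ≤ p) (hp1 : p ≤ 1) (n : ℕ) :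
    (1 - p) ^ n * (1 + n * p) ≤ 1 := by
  have h1 : (1 - p) ^ n * (1 + p) ^ n ≤ 1 := by
    rw [← mul_pow]
    have h : (1 - p) * (1 + p) = 1 - p ^ 2 := by ring
    rw [h]
    exact pow_le_one₀ (by nlinarith) (by nlinarith)
  have h2 : 1 + (n : ℝ) * p ≤ (1 + p) ^ n := one_add_mul_le_pow (by linarith) n
  have h3 : (0:ℝ) ≤ (1 - p) ^ n := pow_nonneg (by linarith) n
  nlinarith

private lemma diff_pow_ge_aux {pl ps : ℝ} {n : ℕ} (hps0 : 0 ≤ ps) (hpspl : ps ≤ pl)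
    (hpl1 : pl ≤ 1) (h1 : 1/2 ≤ (n:ℝ) * pl) (h2 : (n:ℝ) * ps ≤ 1/8) :
    1/5 ≤ (1 - ps) ^ n - (1 - pl) ^ n := by
  have hT1 : (7:ℝ)/8 ≤ (1 - ps) ^ n := by
    have h := one_add_mul_le_pow (a := -ps) (by linarith) n
    rw [mul_neg, ← sub_eq_add_neg, ← sub_eq_add_neg] at h
    linarith
  have hT2 : (1 - pl) ^ n ≤ 2/3 := by
    have h := pow_mul_le_one_aux (le_trans hps0 hpspl) hpl1 n
    have h3 : (0:ℝ) ≤ (1 - pl) ^ n := pow_nonneg (by linarith) n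
    nlinarith
  linarith

private lemma measurable_finset_sup_aux {Ω : Type*} {m : MeasurableSpace Ω} (s : Finset ℕ)
    {f : ℕ → Ω → ℕ} (hf : ∀ i ∈ s, Measurable[m] (f i)) :
    Measurable[m] fun ω => s.sup fun i => f i ω := by
  classical
  induction s using Finset.induction_on with
  | empty => simp only [Finset.sup_empty]; exact measurable_const
  | @insert a s ha ih =>
    simp only [Finset.sup_insert]
    exact (hf a (Finset.mem_insert_self a s)).sup
      (ih fun i hi => hf i (Finset.mem_insert_of_mem hi))

set_option maxHeartbeats 2000000 in
/-- Theorem 1(i): if `r` is monotone and `r(n) → ∞`, then for `l ∈ {0,1}`,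
`P(ξ̄ₙ = aₙ + l  i.o.) = 1`. -/
theorem max_eq_a_add_l_io_one_small_l {Ω : Type*} [MeasureSpace Ω]
    [IsProbabilityMeasure (ℙ : Measure Ω)] (ξ : ℕ → Ω → ℕ)
    (hmeas : ∀ i, Measurable (ξ i))
    (hindep : iIndepFun ξ ℙ)
    (hident : ∀ i, IdentDistrib (ξ i) (ξ 0) ℙ ℙ)
    (hpos : ∀ k : ℕ, 0 < ℙ {ω | ξ 0 ω = k})
    (R r : ℕ → ℝ)
    (hR : ∀ n, R n = -Real.log (ℙ {ω | n ≤ ξ 0 ω}).toReal)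
    (hr : ∀ n : ℕ, 1 ≤ n → r n = R n - R (n - 1))
    (hrmono : Monotone r)
    (hrinf : Tendsto r atTop atTop)
    (a : ℕ → ℕ)
    (ha : ∀ n : ℕ, 1 ≤ n →
      IsGreatest {k : ℕ | 1 / (n : ℝ) ≤ (ℙ {ω | k ≤ ξ 0 ω}).toReal} (a n))
    (l : ℕ) (hl : l ≤ 1) :
    ℙ (limsup (fun n => {ω | ((Finset.range n).sup fun i => ξ i ω) = a n + l})
        atTop) = 1 := by
  classical
  set p : ℕ → ℝ := fun k => (ℙ {ω | k ≤ ξ 0 ω}).toReal with hp_def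
  have hSmeas : ∀ k : ℕ, MeasurableSet {ω | k ≤ ξ 0 ω} := fun k =>
    (hmeas 0) measurableSet_Ici
  have hp_pos : ∀ k, 0 < p k := by
    intro k
    refine ENNReal.toReal_pos ?_ (measure_ne_top _ _)
    refine (lt_of_lt_of_le (hpos k) (measure_mono ?_)).ne'
    intro ω h; exact le_of_eq h.symm
  have hp_le_one : ∀ k, p k ≤ 1 := fun k => by
    simpa using ENNReal.toReal_mono (by simp) (prob_le_one (μ := (ℙ : Measure Ω)))
  have hdecomp : ∀ k, p k = (ℙ {ω | ξ 0 ω = k}).toReal + p (k + 1) := by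
    intro k
    have hset : {ω | k ≤ ξ 0 ω} = {ω | ξ 0 ω = k} ∪ {ω | k + 1 ≤ ξ 0 ω} := by
      ext ω; simp only [Set.mem_setOf_eq, Set.mem_union]; omega
    have hdisj : Disjoint {ω | ξ 0 ω = k} {ω | k + 1 ≤ ξ 0 ω} := by
      rw [Set.disjoint_left]; intro ω h1 h2; simp only [Set.mem_setOf_eq] at h1 h2; omega
    rw [hp_def]
    simp only
    rw [hset, measure_union hdisj (hSmeas (k+1)),
      ENNReal.toReal_add (measure_ne_top _ _) (measure_ne_top _ _)]
  have hp_strict : ∀ k, p (k + 1) < p k := by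
    intro k
    have h1 := hdecomp k
    have h2 : 0 < (ℙ {ω | ξ 0 ω = k}).toReal :=
      ENNReal.toReal_pos (hpos k).ne' (measure_ne_top _ _)
    linarith
  have hp_anti : Antitone p := antitone_nat_of_succ_le fun k => (hp_strict k).le
  have hp_tendsto : Tendsto p atTop (nhds 0) := by
    have h1 : Tendsto (fun k => ℙ {ω | k ≤ ξ 0 ω}) atTop
        (nhds (ℙ (⋂ k, {ω | k ≤ ξ 0 ω}))) := by
      refine tendsto_measure_iInter_atTop (fun k => (hSmeas k).nullMeasurableSet)
        (fun j k hjk ω h => le_trans hjk h) ⟨0, measure_ne_top _ _⟩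
    have h2 : (⋂ k, {ω | k ≤ ξ 0 ω}) = (∅ : Set Ω) := by
      ext ω
      simp only [Set.mem_iInter, Set.mem_setOf_eq, Set.mem_empty_iff_false, iff_false, not_forall]
      exact ⟨ξ 0 ω + 1, by omega⟩
    rw [h2, measure_empty] at h1
    have := (ENNReal.tendsto_toReal (by simp)).comp h1
    exact this
  -- tail-ratio bound coming from `r → ∞`
  have hratio : ∃ M : ℕ, 1 ≤ M ∧ ∀ m, M ≤ m → 64 * p (m + 1) ≤ p m := by
    obtain ⟨N, hN⟩ := eventually_atTop.mp (hrinf.eventually_ge_atTop (Real.log 64))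
    refine ⟨N + 1, by omega, fun m hm => ?_⟩
    have h1 : Real.log 64 ≤ r (m + 1) := hN (m + 1) (by omega)
    rw [hr (m + 1) (by omega)] at h1
    simp only [Nat.add_sub_cancel, hR] at h1
    have h2 : Real.log 64 ≤ -Real.log (p (m + 1)) + Real.log (p m) := by
      simp only [hp_def]; linarith
    rw [← Real.log_le_log_iff (mul_pos (by norm_num) (hp_pos (m + 1))) (hp_pos m),
      Real.log_mul (by norm_num) (hp_pos (m + 1)).ne']
    linarith
  obtain ⟨M, hM1, hMr⟩ := hratio
  -- distribution of the maximum
  have hcdf : ∀ (n k : ℕ), ℙ {ω | ((Finset.range n).sup fun i => ξ i ω) ≤ k}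
      = (ℙ {ω | ξ 0 ω ≤ k}) ^ n := by
    intro n k
    have hset : {ω | ((Finset.range n).sup fun i => ξ i ω) ≤ k}
        = ⋂ i ∈ Finset.range n, ξ i ⁻¹' Set.Iic k := by
      ext ω
      simp [Finset.sup_le_iff]
    rw [hset, hindep.meas_biInter (fun i _ => ⟨Set.Iic k, measurableSet_Iic, rfl⟩)]
    rw [Finset.prod_congr rfl (fun i _ => (hident i).measure_mem_eq (measurableSet_Iic (a := k))),
      Finset.prod_const, Finset.card_range]
    rfl
  have hq : ∀ k, (ℙ {ω | ξ 0 ω ≤ k}).toReal = 1 - p (k + 1) := by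
    intro k
    have hset : {ω | ξ 0 ω ≤ k} = {ω | k + 1 ≤ ξ 0 ω}ᶜ := by
      ext ω; simp only [Set.mem_setOf_eq, Set.mem_compl_iff]; omega
    have hm : MeasurableSet {ω | k + 1 ≤ ξ 0 ω} := (hmeas 0) measurableSet_Ici
    rw [hset, prob_compl_eq_one_sub hm,
      ENNReal.toReal_sub_of_le prob_le_one ENNReal.one_ne_top, ENNReal.toReal_one, hp_def]
  have hsupmeas : ∀ n k : ℕ,
      MeasurableSet {ω | ((Finset.range n).sup fun i => ξ i ω) ≤ k} := by
    intro n k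
    exact measurable_finset_sup_aux (Finset.range n) (fun i _ => hmeas i) measurableSet_Iic
  have hcdf_real : ∀ (n k : ℕ),
      (ℙ {ω | ((Finset.range n).sup fun i => ξ i ω) ≤ k}).toReal = (1 - p (k + 1)) ^ n := by
    intro n k
    rw [hcdf, ENNReal.toReal_pow, hq]
  have hAval : ∀ (n c : ℕ), 1 ≤ c →
      (ℙ {ω | ((Finset.range n).sup fun i => ξ i ω) = c}).toReal
        = (1 - p (c + 1)) ^ n - (1 - p c) ^ n := by
    intro n c hc
    have hsub : {ω | ((Finset.range n).sup fun i => ξ i ω) ≤ c - 1}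
        ⊆ {ω | ((Finset.range n).sup fun i => ξ i ω) ≤ c} := by
      intro ω h; simp only [Set.mem_setOf_eq] at *; omega
    have hEq : {ω | ((Finset.range n).sup fun i => ξ i ω) = c}
        = {ω | ((Finset.range n).sup fun i => ξ i ω) ≤ c}
          \ {ω | ((Finset.range n).sup fun i => ξ i ω) ≤ c - 1} := by
      ext ω; simp only [Set.mem_setOf_eq, Set.mem_diff]; omega
    rw [hEq, measure_diff hsub (hsupmeas n (c - 1)).nullMeasurableSet (measure_ne_top _ _),
      ENNReal.toReal_sub_of_le (measure_mono hsub) (measure_ne_top _ _),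
      hcdf_real, hcdf_real]
    have h : c - 1 + 1 = c := by omega
    rw [h]
  -- characterization of `a`
  have hachar : ∀ (n c : ℕ), 1 ≤ n → 1 / (n : ℝ) ≤ p c → p (c + 1) < 1 / (n : ℝ) →
      a n = c := by
    intro n c hn h1 h2
    have hG := ha n hn
    refine le_antisymm ?_ (hG.2 (by simpa [hp_def] using h1))
    by_contra hlt
    have h3 : c + 1 ≤ a n := by omega
    have h4 : p (a n) ≤ p (c + 1) := hp_anti h3
    have h5 : 1 / (n : ℝ) ≤ p (a n) := by simpa [hp_def] using hG.1
    linarith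
  have hatop : Tendsto a atTop atTop := by
    rw [tendsto_atTop]
    intro b
    filter_upwards [eventually_ge_atTop (⌈1 / p b⌉₊ + 1)] with n hn
    have hn1 : 1 ≤ n := by omega
    have h1 : 1 / p b ≤ (n:ℝ) := le_trans (Nat.le_ceil _)
      (by exact_mod_cast (by omega : ⌈1 / p b⌉₊ ≤ n))
    have h2 : 1 / (n:ℝ) ≤ p b := by
      have := one_div_le_one_div_of_le (div_pos one_pos (hp_pos b)) h1
      rwa [one_div_one_div] at this
    exact (ha n hn1).2 (by simpa [hp_def] using h2)
  -- key estimate: infinitely many good times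
  have hkey : ∀ m : ℕ, ∃ n, m ≤ n ∧
      1/5 ≤ (ℙ {ω | ((Finset.range n).sup fun i => ξ i ω) = a n + l}).toReal := by
    intro m
    obtain ⟨a0, ha0⟩ := eventually_atTop.mp
      (hp_tendsto.eventually_lt_const (show (0:ℝ) < 1/(m+1) by positivity))
    set A := max a0 M with hA_def
    have hAM : M ≤ A := le_max_right _ _
    have hA1 : 1 ≤ A := le_trans hM1 hAM
    have hpA : p A < 1/(m+1) := ha0 A (le_max_left _ _)
    have hrA : 64 * p (A + 1) ≤ p A := hMr A hAM
    have hrA1 : 64 * p (A + 2) ≤ p (A + 1) := hMr (A + 1) (by omega)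
    have hpa := hp_pos A
    have hpa1 := hp_pos (A + 1)
    have hpa2 := hp_pos (A + 2)
    have hm1 : p A * (m + 1) < 1 := by
      rw [div_eq_inv_mul] at hpA
      calc p A * (m+1) < 1/(m+1) * (m+1) := by
            apply mul_lt_mul_of_pos_right _ (by positivity)
            rw [div_eq_inv_mul]; exact hpA
        _ = 1 := by field_simp
    interval_cases l
    · -- l = 0
      set n := ⌈(7:ℝ) / p A⌉₊ with hn_def
      have hn7 : (7:ℝ) / p A ≤ n := Nat.le_ceil _
      have hceil : (n:ℝ) < 7 / p A + 1 :=
        Nat.ceil_lt_add_one (le_of_lt (div_pos (by norm_num) hpa))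
      have h7 : (7:ℝ) ≤ n * p A := by
        rw [div_le_iff₀ hpa] at hn7; linarith
      have hnA8 : (n:ℝ) * p A < 8 := by
        have h1 : (n:ℝ) * p A < (7 / p A + 1) * p A := mul_lt_mul_of_pos_right hceil hpa
        have e : (7 / p A + 1) * p A = 7 + p A := by field_simp
        rw [e] at h1
        linarith [hp_le_one A]
      have hnn : (0:ℝ) ≤ (n:ℝ) := Nat.cast_nonneg n
      have hs8 : (n:ℝ) * p (A + 1) ≤ 1/8 := by
        nlinarith [mul_le_mul_of_nonneg_left hrA hnn]
      have hn1 : 1 ≤ n := by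
        have : (0:ℝ) < n := by nlinarith
        exact_mod_cast Nat.one_le_iff_ne_zero.mpr (by exact_mod_cast this.ne')
      have hnpos : (0:ℝ) < n := by exact_mod_cast hn1
      have hc1 : 1 / (n:ℝ) ≤ p A := by
        rw [div_le_iff₀ hnpos]; nlinarith
      have hc2 : p (A + 1) < 1 / (n:ℝ) := by
        rw [lt_div_iff₀ hnpos]; nlinarith
      have han : a n = A := hachar n A hn1 hc1 hc2
      have hmn : m ≤ n := by
        have : (m:ℝ) < n := by nlinarith
        exact_mod_cast this.le
      refine ⟨n, hmn, ?_⟩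
      rw [han]
      rw [hAval n (A + 0) (by omega)]
      simpa using diff_pow_ge_aux hpa1.le (hp_anti (by omega : A ≤ A + 1)) (hp_le_one A)
        (by linarith) hs8
    · -- l = 1
      set t := ⌈(1:ℝ) / p (A + 1)⌉₊ with ht_def
      set n := t - 1 with hn_def
      have hx64 : (64:ℝ) ≤ 1 / p (A + 1) := by
        rw [le_div_iff₀ hpa1]; linarith [hp_le_one A]
      have hxt : (1:ℝ) / p (A + 1) ≤ t := Nat.le_ceil _
      have ht64 : 64 ≤ t := by exact_mod_cast le_trans hx64 hxt
      have hncast : (n:ℝ) = (t:ℝ) - 1 := by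
        rw [hn_def, Nat.cast_sub (by omega)]; norm_num
      have hceil : (t:ℝ) < 1 / p (A + 1) + 1 :=
        Nat.ceil_lt_add_one (le_of_lt (div_pos one_pos hpa1))
      have hnx : (n:ℝ) < 1 / p (A + 1) := by rw [hncast]; linarith
      have hnge : 1 / p (A + 1) - 1 ≤ (n:ℝ) := by rw [hncast]; linarith
      have hn1 : 1 ≤ n := by omega
      have hnpos : (0:ℝ) < n := by exact_mod_cast hn1
      have hlt1 : (n:ℝ) * p (A + 1) < 1 := by
        rw [lt_div_iff₀ hpa1] at hnx; linarith
      have hge12 : 1/2 ≤ (n:ℝ) * p (A + 1) := by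
        have h1 : (1 / p (A + 1) - 1) * p (A + 1) = 1 - p (A + 1) := by field_simp
        have h2 : (1 / p (A + 1) - 1) * p (A + 1) ≤ (n:ℝ) * p (A + 1) :=
          mul_le_mul_of_nonneg_right hnge hpa1.le
        rw [h1] at h2
        have : p (A + 1) ≤ 1/64 := by linarith [hp_le_one A]
        linarith
      have hnn : (0:ℝ) ≤ (n:ℝ) := Nat.cast_nonneg n
      have hs8 : (n:ℝ) * p (A + 2) ≤ 1/8 := by
        have key := mul_le_mul_of_nonneg_left hrA1 hnn
        have e : (n:ℝ) * (64 * p (A + 2)) = 64 * ((n:ℝ) * p (A + 2)) := by ring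
        rw [e] at key
        linarith
      have hnpA : (32:ℝ) ≤ (n:ℝ) * p A := by
        have key := mul_le_mul_of_nonneg_left hrA hnn
        have e : (n:ℝ) * (64 * p (A + 1)) = 64 * ((n:ℝ) * p (A + 1)) := by ring
        rw [e] at key
        linarith
      have hc1 : 1 / (n:ℝ) ≤ p A := by rw [div_le_iff₀ hnpos]; linarith
      have hc2 : p (A + 1) < 1 / (n:ℝ) := by rw [lt_div_iff₀ hnpos]; linarith
      have han : a n = A := hachar n A hn1 hc1 hc2
      have hmn : m ≤ n := by
        have h1 : (m:ℝ) * p A < (n:ℝ) * p A := by linarith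
        have : (m:ℝ) < n := lt_of_mul_lt_mul_right h1 hpa.le
        exact_mod_cast this.le
      refine ⟨n, hmn, ?_⟩
      rw [han, hAval n (A + 1) (by omega)]
      exact diff_pow_ge_aux hpa2.le (hp_anti (by omega : A + 1 ≤ A + 2)) (hp_le_one (A+1))
        hge12 hs8
  -- conclusion: Fatou-type bound plus Kolmogorov's 0-1 law
  set A : ℕ → Set Ω := fun n => {ω | ((Finset.range n).sup fun i => ξ i ω) = a n + l}
    with hA_def
  have hAmeas : ∀ n, MeasurableSet (A n) := fun n =>
    measurable_finset_sup_aux (Finset.range n) (fun i _ => hmeas i) (measurableSet_singleton _)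
  have hposS : ENNReal.ofReal (1/5) ≤ ℙ (limsup A atTop) := by
    rw [limsup_eq_iInf_iSup_of_nat]
    simp only [Set.iInf_eq_iInter, Set.iSup_eq_iUnion]
    have htend : Tendsto (fun m => ℙ (⋃ i, ⋃ (_ : i ≥ m), A i)) atTop
        (nhds (ℙ (⋂ m, ⋃ i, ⋃ (_ : i ≥ m), A i))) := by
      refine tendsto_measure_iInter_atTop (fun m =>
        (MeasurableSet.iUnion fun i => MeasurableSet.iUnion fun _ => hAmeas i).nullMeasurableSet)
        (fun j k hjk => Set.iUnion₂_subset fun i hi =>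
          Set.subset_iUnion₂ (s := fun i (_ : i ≥ j) => A i) i (le_trans hjk hi))
        ⟨0, measure_ne_top _ _⟩
    refine ge_of_tendsto htend (Eventually.of_forall fun m => ?_)
    obtain ⟨n, hn, hval⟩ := hkey m
    refine le_trans ?_ (measure_mono (Set.subset_iUnion₂ (s := fun i (_ : i ≥ m) => A i) n hn))
    exact ENNReal.ofReal_le_of_le_toReal hval
  have h01 : ℙ (limsup A atTop) = 0 ∨ ℙ (limsup A atTop) = 1 := by
    refine measure_zero_or_one_of_measurableSet_limsup_atTop
      (fun i => (hmeas i).comap_le) hindep.iIndep ?_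
    rw [limsup_eq_iInf_iSup_of_nat, MeasurableSpace.measurableSet_iInf]
    intro m
    have hSeq : limsup A atTop
        = limsup (fun n => {ω | ((Finset.Ico m n).sup fun i => ξ i ω) = a n + l}) atTop := by
      ext ω
      simp only [mem_limsup_iff_frequently_mem]
      have hMev : ∀ᶠ n in atTop,
          ((Finset.range m).sup fun i => ξ i ω) < a n + l ∧ m ≤ n := by
        filter_upwards [hatop.eventually_gt_atTop ((Finset.range m).sup fun i => ξ i ω),
          eventually_ge_atTop m] with n h1 h2
        exact ⟨by omega, h2⟩
      have hiff : ∀ᶠ n in atTop, (ω ∈ A n ↔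
          ω ∈ {ω' | ((Finset.Ico m n).sup fun i => ξ i ω') = a n + l}) := by
        filter_upwards [hMev] with n hn
        obtain ⟨hlt, hmn⟩ := hn
        have hsplit : (Finset.range n).sup (fun i => ξ i ω)
            = ((Finset.range m).sup fun i => ξ i ω) ⊔ ((Finset.Ico m n).sup fun i => ξ i ω) := by
          rw [← Finset.sup_union, Finset.range_eq_Ico, Finset.range_eq_Ico, Finset.Ico_union_Ico_eq_Ico
            (Nat.zero_le m) hmn]
        simp only [hA_def, Set.mem_setOf_eq, hsplit]
        omega
      constructor
      · intro h
        exact (h.and_eventually hiff).mono fun n hn => hn.2.mp hn.1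
      · intro h
        exact (h.and_eventually hiff).mono fun n hn => hn.2.mpr hn.1
    rw [hSeq]
    have hmble : ∀ n, MeasurableSet[⨆ i, ⨆ (_ : i ≥ m), MeasurableSpace.comap (ξ i) inferInstance]
        {ω | ((Finset.Ico m n).sup fun i => ξ i ω) = a n + l} := by
      intro n
      have hg : Measurable[⨆ i, ⨆ (_ : i ≥ m), MeasurableSpace.comap (ξ i) inferInstance]
          fun ω => (Finset.Ico m n).sup fun i => ξ i ω := by
        refine measurable_finset_sup_aux _ fun i hi => ?_
        have hle : MeasurableSpace.comap (ξ i) inferInstance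
            ≤ ⨆ i, ⨆ (_ : i ≥ m), MeasurableSpace.comap (ξ i) inferInstance :=
          le_iSup₂ (f := fun i (_ : i ≥ m) => MeasurableSpace.comap (ξ i) inferInstance)
            i (Finset.mem_Ico.mp hi).1
        exact Measurable.of_comap_le (le_trans le_rfl hle)
      exact hg (measurableSet_singleton _)
    exact @MeasurableSet.measurableSet_limsup Ω
      (⨆ i, ⨆ (_ : i ≥ m), MeasurableSpace.comap (ξ i) inferInstance) _ hmble
  rcases h01 with h | h
  · rw [h] at hposS
    simp only [nonpos_iff_eq_zero, ENNReal.ofReal_eq_zero] at hposS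
    norm_num at hposS
  · exact h
end

section
/- Under the hypotheses of the preceding setup (r monotone, r(n) → ∞), if the series ∑_{k≥1} exp(-m·r(k)) converges for j = m and ∑_{k≥1} exp(-(m-1)·r(k)) diverges, then P(limsup_{n→∞} (ξ̄_n - a_n) = m) = 1, and moreover P(ξ̄_n = a_n + l infinitely often) = 1 for every l ∈ {-1, 0, 1, …, m}. -/
open MeasureTheory ProbabilityTheory Filter


-- discrete intermediate value theorem going down
private lemma ivtDown : ∀ (k : ℕ) (d : ℕ → ℤ) (l : ℤ) (n₁ : ℕ),
    (∀ n, n₁ ≤ n → d n - 1 ≤ d (n + 1)) → l ≤ d n₁ → d (n₁ + k) ≤ l →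
    ∃ n, n₁ ≤ n ∧ n ≤ n₁ + k ∧ d n = l := by
  intro k
  induction k with
  | zero => intro d l n₁ _ h1 h2; exact ⟨n₁, le_rfl, le_rfl, le_antisymm h2 h1⟩
  | succ k ih =>
    intro d l n₁ hstep h1 h2
    by_cases hc : d n₁ ≤ l
    · exact ⟨n₁, le_rfl, Nat.le_add_right _ _, le_antisymm hc h1⟩
    · have h1' : l ≤ d (n₁ + 1) := by
        have := hstep n₁ le_rfl
        omega
      have h2' : d ((n₁ + 1) + k) ≤ l := by
        rw [show (n₁ + 1) + k = n₁ + (k + 1) by omega]; exact h2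
      obtain ⟨n, hn1, hn2, hn3⟩ := ih d l (n₁ + 1) (fun n hn => hstep n (by omega)) h1' h2'
      exact ⟨n, by omega, by omega, hn3⟩

set_option maxHeartbeats 2000000 in
/-- Corollary 1: if `∑ exp(-m r(k))` converges and `∑ exp(-(m-1) r(k))` diverges,
then a.s. `limsup (ξ̄ₙ - aₙ) = m`, and `P(ξ̄ₙ = aₙ + l  i.o.) = 1` for every
`l ∈ {-1, 0, 1, …, m}`. -/
theorem limsup_max_sub_a_eq_m {Ω : Type*} [MeasureSpace Ω]
    [IsProbabilityMeasure (ℙ : Measure Ω)] (ξ : ℕ → Ω → ℕ)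
    (hmeas : ∀ i, Measurable (ξ i))
    (hindep : iIndepFun ξ ℙ)
    (hident : ∀ i, IdentDistrib (ξ i) (ξ 0) ℙ ℙ)
    (hpos : ∀ k : ℕ, 0 < ℙ {ω | ξ 0 ω = k})
    (R r : ℕ → ℝ)
    (hR : ∀ n, R n = -Real.log (ℙ {ω | n ≤ ξ 0 ω}).toReal)
    (hr : ∀ n : ℕ, 1 ≤ n → r n = R n - R (n - 1))
    (hrmono : Monotone r)
    (hrinf : Tendsto r atTop atTop)
    (a : ℕ → ℕ)
    (ha : ∀ n : ℕ, 1 ≤ n →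
      IsGreatest {k : ℕ | 1 / (n : ℝ) ≤ (ℙ {ω | k ≤ ξ 0 ω}).toReal} (a n))
    (m : ℕ) (hm : 1 ≤ m)
    (hconv : Summable (fun k : ℕ => Real.exp (-(m : ℝ) * r (k + 1))))
    (hdiv : ¬ Summable (fun k : ℕ => Real.exp (-((m : ℝ) - 1) * r (k + 1)))) :
    ℙ {ω | limsup (fun n => (((Finset.range n).sup fun i => ξ i ω : ℕ) : ℤ) - (a n : ℤ))
        atTop = (m : ℤ)} = 1 ∧
    ∀ l : ℤ, -1 ≤ l → l ≤ (m : ℤ) →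
      ℙ (limsup (fun n =>
          {ω | (((Finset.range n).sup fun i => ξ i ω : ℕ) : ℤ) = (a n : ℤ) + l})
        atTop) = 1 := by
  classical
  set q : ℕ → ℝ := fun k => (ℙ {ω | k ≤ ξ 0 ω}).toReal with hq
  have hfin : ∀ s : Set Ω, ℙ s ≠ ⊤ := fun s => measure_ne_top _ _
  have hmeasIci : ∀ i k, MeasurableSet {ω | k ≤ ξ i ω} := fun i k =>
    (hmeas i) (measurableSet_Ici : MeasurableSet (Set.Ici k))
  have hqpos : ∀ k, 0 < q k := by
    intro k
    refine ENNReal.toReal_pos (fun h0 => ?_) (hfin _)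
    have hsub : {ω | ξ 0 ω = k} ⊆ {ω | k ≤ ξ 0 ω} := fun ω hω => le_of_eq hω.symm
    exact (hpos k).ne' (le_antisymm (h0 ▸ measure_mono hsub) zero_le)
  have hq1 : q 0 = 1 := by
    have : {ω : Ω | 0 ≤ ξ 0 ω} = Set.univ := by ext ω; simp
    simp [hq, this]
  have hqsucc : ∀ k, q (k + 1) < q k := by
    intro k
    have hsplit : {ω | k ≤ ξ 0 ω} = {ω | ξ 0 ω = k} ∪ {ω | k + 1 ≤ ξ 0 ω} := by
      ext ω; simp only [Set.mem_setOf_eq, Set.mem_union]; omega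
    have hdisj : Disjoint {ω | ξ 0 ω = k} {ω | k + 1 ≤ ξ 0 ω} := by
      rw [Set.disjoint_left]; intro ω h1 h2; simp only [Set.mem_setOf_eq] at h1 h2; omega
    have hmeq : ℙ {ω | k ≤ ξ 0 ω} = ℙ {ω | ξ 0 ω = k} + ℙ {ω | k + 1 ≤ ξ 0 ω} := by
      rw [hsplit, measure_union hdisj (hmeasIci 0 (k + 1))]
    have hadd := ENNReal.toReal_add (hfin {ω | ξ 0 ω = k}) (hfin {ω | k + 1 ≤ ξ 0 ω})
    have hpos' : 0 < (ℙ {ω | ξ 0 ω = k}).toReal :=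
      ENNReal.toReal_pos (hpos k).ne' (hfin _)
    have hsum : q k = (ℙ {ω | ξ 0 ω = k}).toReal + q (k + 1) := by
      show (ℙ {ω | k ≤ ξ 0 ω}).toReal = _
      rw [hmeq, hadd]
    linarith
  have hqanti : Antitone q := antitone_nat_of_succ_le fun k => (hqsucc k).le
  have hq_tendsto : Tendsto q atTop (nhds 0) := by
    have hiInter : ⋂ k, {ω : Ω | k ≤ ξ 0 ω} = ∅ := by
      ext ω; simp only [Set.mem_iInter, Set.mem_setOf_eq, Set.mem_empty_iff_false, iff_false]
      intro h; exact absurd (h (ξ 0 ω + 1)) (by omega)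
    have h1 : Tendsto (fun k => ℙ {ω | k ≤ ξ 0 ω}) atTop (nhds 0) := by
      have := tendsto_measure_iInter_atTop (μ := ℙ)
        (s := fun k => {ω : Ω | k ≤ ξ 0 ω}) (fun k => (hmeasIci 0 k).nullMeasurableSet)
        (fun i j hij ω hω => le_trans hij hω) ⟨0, hfin _⟩
      rwa [hiInter, measure_empty] at this
    have := (ENNReal.tendsto_toReal (by simp : (0 : ENNReal) ≠ ⊤)).comp h1
    have h3 : Tendsto (ENNReal.toReal ∘ fun k => ℙ {ω | k ≤ ξ 0 ω}) atTop (nhds 0) := by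
      simpa using this
    exact h3
  have hqr : ∀ k, q (k + 1) = q k * Real.exp (-(r (k + 1))) := by
    intro k
    have hqdef : ∀ n, q n = (ℙ {ω | n ≤ ξ 0 ω}).toReal := fun n => rfl
    have hrk : r (k + 1) = Real.log (q k) - Real.log (q (k + 1)) := by
      rw [hr (k + 1) (by omega), hR, hR, Nat.add_sub_cancel, ← hqdef, ← hqdef]
      ring
    rw [hrk, neg_sub, Real.exp_sub, Real.exp_log (hqpos (k + 1)), Real.exp_log (hqpos k)]
    rw [mul_comm, div_mul_cancel₀ _ (hqpos k).ne']
  have hrpos : ∀ k, 0 < r (k + 1) := by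
    intro k
    have h := hqr k
    by_contra hc
    push_neg at hc
    have : 1 ≤ Real.exp (-(r (k + 1))) := by
      rw [← Real.exp_zero]; exact Real.exp_le_exp.2 (by linarith)
    nlinarith [hqsucc k, hqpos k]
  have hupper : ∀ (k j : ℕ), q (k + j) ≤ q k * Real.exp (-(j : ℝ) * r (k + 1)) := by
    intro k j
    induction j with
    | zero => simp
    | succ j ih =>
      have : q (k + (j + 1)) = q (k + j) * Real.exp (-(r (k + j + 1))) := by
        rw [show k + (j + 1) = (k + j) + 1 by omega]; exact hqr (k + j)
      rw [this]
      push_cast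
      calc q (k + j) * Real.exp (-(r (k + j + 1)))
          ≤ (q k * Real.exp (-(j : ℝ) * r (k + 1))) * Real.exp (-(r (k + 1))) := by
            apply mul_le_mul ih _ (Real.exp_pos _).le
              (mul_nonneg (hqpos k).le (Real.exp_pos _).le)
            exact Real.exp_le_exp.2 (neg_le_neg (hrmono (by omega)))
        _ = q k * Real.exp (-((j : ℝ) + 1) * r (k + 1)) := by
            rw [mul_assoc, ← Real.exp_add]; ring_nf
  have hlower : ∀ (k j : ℕ), q k * Real.exp (-(j : ℝ) * r (k + j)) ≤ q (k + j) := by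
    intro k j
    induction j with
    | zero => simp
    | succ j ih =>
      have heq : q (k + (j + 1)) = q (k + j) * Real.exp (-(r (k + j + 1))) := by
        rw [show k + (j + 1) = (k + j) + 1 by omega]; exact hqr (k + j)
      rw [heq]
      push_cast
      have h1 : q k * Real.exp (-(j : ℝ) * r (k + j + 1)) ≤ q k * Real.exp (-(j : ℝ) * r (k + j)) := by
        apply mul_le_mul_of_nonneg_left _ (hqpos k).le
        apply Real.exp_le_exp.2
        have := hrmono (show k + j ≤ k + j + 1 by omega)
        have hj : (0:ℝ) ≤ (j:ℝ) := Nat.cast_nonneg j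
        nlinarith
      calc q k * Real.exp (-((j:ℝ) + 1) * r (k + (j + 1)))
          = (q k * Real.exp (-(j : ℝ) * r (k + j + 1))) * Real.exp (-(r (k + j + 1))) := by
            rw [mul_assoc, ← Real.exp_add]; ring_nf
        _ ≤ (q k * Real.exp (-(j : ℝ) * r (k + j))) * Real.exp (-(r (k + j + 1))) :=
            mul_le_mul_of_nonneg_right h1 (Real.exp_pos _).le
        _ ≤ q (k + j) * Real.exp (-(r (k + j + 1))) :=
            mul_le_mul_of_nonneg_right ih (Real.exp_pos _).le
  -- helpers for reciprocal flipping
  have hle_inv : ∀ x y : ℝ, 0 < x → 0 < y → (1 / x ≤ y ↔ 1 / y ≤ x) := by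
    intro x y hx hy; rw [div_le_iff₀ hx, div_le_iff₀ hy, mul_comm]
  have hlt_inv : ∀ x y : ℝ, 0 < x → 0 < y → (y < 1 / x ↔ x < 1 / y) := by
    intro x y hx hy; rw [lt_div_iff₀ hx, lt_div_iff₀ hy, mul_comm]
  have han : ∀ n : ℕ, 1 ≤ n → 1 / (n : ℝ) ≤ q (a n) ∧ ∀ k : ℕ, 1 / (n : ℝ) ≤ q k → k ≤ a n :=
    fun n hn => ⟨(ha n hn).1, fun k hk => (ha n hn).2 hk⟩
  set c : ℕ → ℕ := fun k => ⌈1 / q k⌉₊ with hc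
  have hnpos : ∀ n : ℕ, 1 ≤ n → (0:ℝ) < n := fun n hn => by exact_mod_cast Nat.pos_of_ne_zero (by omega)
  have hc0 : c 0 = 1 := by
    show ⌈1 / q 0⌉₊ = 1
    rw [hq1]; norm_num
  have hcmono : Monotone c := by
    intro j k hjk
    exact Nat.ceil_mono (by
      apply div_le_div_of_nonneg_left _ (hqpos k) (hqanti hjk) <;> norm_num)
  have hc1 : ∀ k, 1 ≤ c k := fun k => hc0 ▸ hcmono (Nat.zero_le k)
  have hkey : ∀ n k : ℕ, 1 ≤ n → (a n = k ↔ c k ≤ n ∧ n < c (k + 1)) := by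
    intro n k hn
    constructor
    · rintro rfl
      constructor
      · rw [hc]
        apply Nat.ceil_le.2
        rw [hle_inv _ _ (hqpos _) (hnpos n hn)] at *
        exact (han n hn).1
      · rw [hc]
        apply Nat.lt_ceil.2
        have hq2 : q (a n + 1) < 1 / n := by
          by_contra hcon
          push_neg at hcon
          exact absurd ((han n hn).2 _ hcon) (by omega)
        exact (hlt_inv _ _ (hqpos (a n + 1)) (hnpos n hn)).2 hq2
    · rintro ⟨h1, h2⟩
      have hk1 : 1 / (n:ℝ) ≤ q k := by
        rw [hle_inv _ _ (hnpos n hn) (hqpos k)]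
        exact Nat.ceil_le.1 h1
      have hk2 : q (k + 1) < 1 / n := by
        rw [← hlt_inv _ _ (hqpos (k+1)) (hnpos n hn)]
        exact Nat.lt_ceil.1 h2
      have h3 := (han n hn).2 k hk1
      have h4 : a n ≤ k := by
        by_contra hcon
        push_neg at hcon
        exact absurd ((han n hn).1.trans (hqanti hcon)) (not_le.2 hk2)
      omega
  have hamono : ∀ n n' : ℕ, 1 ≤ n → n ≤ n' → a n ≤ a n' := by
    intro n n' hn hnn
    apply (han n' (le_trans hn hnn)).2
    refine le_trans ?_ (han n hn).1
    apply div_le_div_of_nonneg_left _ (hnpos n hn) (by exact_mod_cast hnn) <;> norm_num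
  have hainf : Tendsto a atTop atTop := by
    apply tendsto_atTop.2
    intro K
    rw [eventually_atTop]
    refine ⟨max 1 (c K), fun n hn => ?_⟩
    have hn1 : 1 ≤ n := le_trans (le_max_left _ _) hn
    apply (han n hn1).2
    rw [hle_inv _ _ (hnpos n hn1) (hqpos K)]
    exact le_trans (Nat.ceil_le.1 (le_trans (le_max_right _ _) hn)) (by rfl)
  have hcinv_le : ∀ k, 1 / q k ≤ (c k : ℝ) := fun k => Nat.le_ceil _
  have hcinv_lt : ∀ k, (c k : ℝ) < 1 / q k + 1 :=
    fun k => Nat.ceil_lt_add_one (by positivity)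
  have hqinv_succ : ∀ k, 1 / q (k + 1) = Real.exp (r (k + 1)) / q k := by
    intro k
    rw [hqr k]
    rw [one_div, mul_inv, Real.exp_neg, inv_inv, mul_comm, ← div_eq_mul_inv]
  -- threshold k₀
  obtain ⟨k₁, hk₁⟩ := eventually_atTop.1 (tendsto_atTop.1 hrinf 2)
  have hqle1 : ∀ k, q k ≤ 1 := fun k => hq1 ▸ hqanti (Nat.zero_le k)
  have hqinvge1 : ∀ k, (1:ℝ) ≤ 1 / q k := fun k => by
    rw [le_div_iff₀ (hqpos k)]; simpa using hqle1 k
  have hexp2 : (4:ℝ) ≤ Real.exp 2 := by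
    have h1 : (1:ℝ) + 1 ≤ Real.exp 1 := Real.add_one_le_exp 1
    rw [show (2:ℝ) = 1 + 1 by norm_num, Real.exp_add]
    nlinarith
  have hcgrow : ∀ k, k₁ ≤ k → c k < c (k + 1) := by
    intro k hk
    have hr2 : 2 ≤ r (k + 1) := hk₁ (k + 1) (by omega)
    have h2 : Real.exp 2 ≤ Real.exp (r (k + 1)) := Real.exp_le_exp.2 hr2
    have h3 : 1 / q (k + 1) = Real.exp (r (k + 1)) / q k := hqinv_succ k
    have h4 : 1 / q k + 3 ≤ 1 / q (k + 1) := by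
      rw [h3]
      have h5 : (1:ℝ) ≤ 1 / q k := hqinvge1 k
      have h6 : Real.exp (r (k+1)) / q k = (1 / q k) * Real.exp (r (k+1)) := by
        field_simp
      rw [h6]
      nlinarith
    have : (c k : ℝ) < 1 / q (k + 1) := by
      have := hcinv_lt k
      linarith
    exact_mod_cast Nat.lt_ceil.2 this
  -- partition of [1, c K) into fibers
  have hpart : ∀ (g : ℕ → ℝ) (K : ℕ), ∑ n ∈ Finset.Ico (c 0) (c K), g n
      = ∑ k ∈ Finset.range K, ∑ n ∈ Finset.Ico (c k) (c (k + 1)), g n := by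
    intro g K
    induction K with
    | zero => simp
    | succ K ih =>
      rw [Finset.sum_range_succ, ← ih,
        Finset.sum_Ico_consecutive _ (hcmono (Nat.zero_le K)) (hcmono (Nat.le_succ K))]
  have hfib : ∀ (k n : ℕ), c k ≤ n → n < c (k + 1) → a n = k := by
    intro k n h1 h2
    exact (hkey n k (le_trans (hc1 k) h1)).2 ⟨h1, h2⟩
  have hcount_le : ∀ k, ((c (k + 1) - c k : ℕ) : ℝ) ≤ 1 / q (k + 1) + 1 := by
    intro k
    rw [Nat.cast_sub (hcmono (Nat.le_succ k))]
    have h1 := hcinv_lt (k + 1)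
    have h2 := hcinv_le k
    have h3 := hqinvge1 k
    linarith
  have hcount_ge : ∀ k, 1 / q (k + 1) - 1 / q k - 1 ≤ ((c (k + 1) - c k : ℕ) : ℝ) := by
    intro k
    rw [Nat.cast_sub (hcmono (Nat.le_succ k))]
    have h1 := hcinv_le (k + 1)
    have h2 := hcinv_lt k
    linarith
  have hcunbdd : ∀ N : ℕ, ∃ K, N ≤ c K := by
    intro N
    obtain ⟨K, hK⟩ := (hq_tendsto.eventually_lt_const
      (by positivity : (0:ℝ) < 1 / (N + 1))).exists
    refine ⟨K, ?_⟩
    have h1 : (N:ℝ) ≤ 1 / q K := by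
      rw [le_div_iff₀ (hqpos K)]
      rw [lt_div_iff₀ (by positivity : (0:ℝ) < (N:ℝ)+1)] at hK
      nlinarith [hqpos K]
    exact_mod_cast le_trans h1 (hcinv_le K)
  -- summability of q
  have hqsummable : Summable q := by
    apply summable_of_ratio_norm_eventually_le (r := Real.exp (-2))
    · rw [Real.exp_lt_one_iff]; norm_num
    · rw [eventually_atTop]
      refine ⟨k₁, fun k hk => ?_⟩
      rw [Real.norm_eq_abs, Real.norm_eq_abs, abs_of_pos (hqpos _), abs_of_pos (hqpos _)]
      rw [hqr k, mul_comm (q k)]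
      apply mul_le_mul_of_nonneg_right _ (hqpos k).le
      exact Real.exp_le_exp.2 (by have := hk₁ (k+1) (by omega); linarith)
  have hsum_exp : Summable (fun k : ℕ => Real.exp (-(m : ℝ) * r (k + 2))) :=
    (summable_nat_add_iff 1).2 hconv
  -- S1 : convergence part
  have hS1 : Summable (fun n => q (a n + (m + 1))) := by
    set G : ℕ → ℝ := fun k => Real.exp (-(m:ℝ) * r (k + 2)) + q (k + (m + 1)) with hG
    have hGsum : Summable G := hsum_exp.add ((summable_nat_add_iff (m + 1)).2 hqsummable)
    have hGnonneg : ∀ k, 0 ≤ G k := fun k => by positivity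
    apply summable_of_sum_range_le (c := 1 + ∑' k, G k)
      (fun n => (hqpos _).le)
    intro N
    obtain ⟨K, hK⟩ := hcunbdd N
    have hsplit : ∑ n ∈ Finset.range N, q (a n + (m + 1))
        ≤ 1 + ∑ n ∈ Finset.Ico 1 (c K), q (a n + (m + 1)) := by
      rcases Nat.eq_zero_or_pos N with h | h
      · subst h
        simp only [Finset.range_zero, Finset.sum_empty]
        positivity
      · rw [Finset.range_eq_Ico, ← Finset.sum_Ico_consecutive _ (Nat.zero_le 1) h]
        have h1 : ∑ n ∈ Finset.Ico 0 1, q (a n + (m + 1)) ≤ 1 := by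
          rw [show Finset.Ico 0 1 = {0} by decide, Finset.sum_singleton]
          exact hqle1 _
        have h2 : ∑ n ∈ Finset.Ico 1 N, q (a n + (m + 1))
            ≤ ∑ n ∈ Finset.Ico 1 (c K), q (a n + (m + 1)) := by
          apply Finset.sum_le_sum_of_subset_of_nonneg
            (Finset.Ico_subset_Ico le_rfl hK)
          intro n _ _; exact (hqpos _).le
        linarith
    refine le_trans hsplit (by
      have hmain : ∑ n ∈ Finset.Ico 1 (c K), q (a n + (m + 1)) ≤ ∑' k, G k := by
        have e1 : Finset.Ico 1 (c K) = Finset.Ico (c 0) (c K) := by rw [hc0]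
        rw [e1, hpart]
        have hterm : ∀ k ∈ Finset.range K,
            ∑ n ∈ Finset.Ico (c k) (c (k + 1)), q (a n + (m + 1)) ≤ G k := by
          intro k _
          have hconst : ∑ n ∈ Finset.Ico (c k) (c (k + 1)), q (a n + (m + 1))
              = ((c (k + 1) - c k : ℕ) : ℝ) * q (k + (m + 1)) := by
            rw [Finset.sum_congr rfl (fun n hn => by
              rw [hfib k n (Finset.mem_Ico.1 hn).1 (Finset.mem_Ico.1 hn).2])]
            rw [Finset.sum_const, Nat.card_Ico, nsmul_eq_mul]
          rw [hconst]
          have hq_ratio : (1 / q (k + 1)) * q (k + (m + 1)) ≤ Real.exp (-(m:ℝ) * r (k + 2)) := by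
            have h1 : q (k + (m + 1)) ≤ q (k + 1) * Real.exp (-(m:ℝ) * r (k + 2)) := by
              have := hupper (k + 1) m
              rw [show k + 1 + m = k + (m + 1) by omega] at this
              exact this
            rw [div_mul_eq_mul_div, div_le_iff₀ (hqpos (k+1)), one_mul]
            calc q (k + (m+1)) ≤ q (k + 1) * Real.exp (-(m:ℝ) * r (k + 2)) := h1
              _ = Real.exp (-(m:ℝ) * r (k + 2)) * q (k + 1) := by ring
          calc ((c (k + 1) - c k : ℕ) : ℝ) * q (k + (m + 1))
              ≤ (1 / q (k + 1) + 1) * q (k + (m + 1)) :=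
                mul_le_mul_of_nonneg_right (hcount_le k) (hqpos _).le
            _ = (1 / q (k + 1)) * q (k + (m + 1)) + q (k + (m + 1)) := by ring
            _ ≤ Real.exp (-(m:ℝ) * r (k + 2)) + q (k + (m + 1)) :=
                by linarith [hq_ratio]
            _ = G k := rfl
        calc ∑ k ∈ Finset.range K, ∑ n ∈ Finset.Ico (c k) (c (k + 1)), q (a n + (m + 1))
            ≤ ∑ k ∈ Finset.range K, G k := Finset.sum_le_sum hterm
          _ ≤ ∑' k, G k := Summable.sum_le_tsum _ (fun k _ => hGnonneg k) hGsum
      linarith)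
  -- S2 : divergence part
  have hS2 : ¬ Summable (fun n => q (a n + m)) := by
    intro hsum
    apply hdiv
    set E : ℕ → ℝ := fun k => Real.exp (-((m:ℝ) - 1) * r (k + m)) with hE
    have hEnonneg : ∀ k, 0 ≤ E k := fun k => (Real.exp_pos _).le
    set Cq : ℝ := ∑' k, q (k + m) with hCq
    have hCqsum : Summable (fun k => q (k + m)) := (summable_nat_add_iff m).2 hqsummable
    set S : ℝ := ∑' n, q (a n + m) with hS
    have hclaim : ∀ k, k₁ ≤ k →
        (1/2) * E k ≤ ((c (k + 1) - c k : ℕ) : ℝ) * q (k + m) + q (k + m) := by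
      intro k hk
      have hu := hqpos (k + 1)
      have hlow : q (k + 1) * E k ≤ q (k + m) := by
        have := hlower (k + 1) (m - 1)
        rw [show k + 1 + (m - 1) = k + m by omega] at this
        rw [hE]
        have hcast : ((m - 1 : ℕ) : ℝ) = (m : ℝ) - 1 := by
          rw [Nat.cast_sub hm]; norm_num
        rw [← hcast]
        exact this
      have hcnt : 1 / (2 * q (k + 1)) ≤ ((c (k + 1) - c k : ℕ) : ℝ) + 1 := by
        have h1 := hcount_ge k
        have h2 : 1 / q k = Real.exp (-(r (k+1))) / q (k + 1) := by
          rw [hqr k, div_eq_div_iff (hqpos k).ne' (mul_pos (hqpos k) (Real.exp_pos _)).ne']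
          ring
        have h3 : Real.exp (-(r (k + 1))) ≤ 1/2 := by
          have hr2 : 2 ≤ r (k + 1) := hk₁ (k + 1) (by omega)
          have : Real.exp (-(r (k+1))) ≤ Real.exp (-2) := Real.exp_le_exp.2 (by linarith)
          have h4 : Real.exp (-2) ≤ 1/2 := by
            rw [Real.exp_neg]
            rw [inv_le_comm₀ (Real.exp_pos 2) (by norm_num)]
            linarith
          linarith
        have h5 : 1 / q (k + 1) - 1 / q k ≥ 1 / q (k+1) - (1/2) / q (k + 1) := by
          rw [h2]
          have h5' : Real.exp (-(r (k+1))) / q (k + 1) ≤ (1/2) / q (k + 1) := by gcongr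
          linarith
        have h6 : 1 / q (k+1) - (1/2) / q (k + 1) = 1 / (2 * q (k + 1)) := by
          field_simp; ring
        linarith
      have hqm_pos := hqpos (k + m)
      calc (1/2) * E k = (1 / (2 * q (k + 1))) * (q (k + 1) * E k) := by
            field_simp
        _ ≤ (((c (k + 1) - c k : ℕ) : ℝ) + 1) * q (k + m) := by
            apply mul_le_mul hcnt hlow (by positivity)
            positivity
        _ = ((c (k + 1) - c k : ℕ) : ℝ) * q (k + m) + q (k + m) := by ring
    -- partial sums of E are bounded
    have hbdd : ∀ K : ℕ, ∑ k ∈ Finset.Ico k₁ K, E k ≤ 2 * (S + Cq) := by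
      intro K
      have h1 : ∑ k ∈ Finset.Ico k₁ K, (1/2) * E k
          ≤ ∑ k ∈ Finset.Ico k₁ K, (((c (k + 1) - c k : ℕ) : ℝ) * q (k + m) + q (k + m)) :=
        Finset.sum_le_sum (fun k hk => hclaim k (Finset.mem_Ico.1 hk).1)
      have h2 : ∑ k ∈ Finset.Ico k₁ K, ((c (k + 1) - c k : ℕ) : ℝ) * q (k + m) ≤ S := by
        have h3 : ∀ k, ((c (k + 1) - c k : ℕ) : ℝ) * q (k + m)
            = ∑ n ∈ Finset.Ico (c k) (c (k + 1)), q (a n + m) := by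
          intro k
          rw [Finset.sum_congr rfl (fun n hn => by
            rw [hfib k n (Finset.mem_Ico.1 hn).1 (Finset.mem_Ico.1 hn).2])]
          rw [Finset.sum_const, Nat.card_Ico, nsmul_eq_mul]
        calc ∑ k ∈ Finset.Ico k₁ K, ((c (k + 1) - c k : ℕ) : ℝ) * q (k + m)
            ≤ ∑ k ∈ Finset.range K, ((c (k + 1) - c k : ℕ) : ℝ) * q (k + m) := by
              apply Finset.sum_le_sum_of_subset_of_nonneg
              · intro x hx; exact Finset.mem_range.2 (Finset.mem_Ico.1 hx).2
              · intro k _ _; positivity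
          _ = ∑ n ∈ Finset.Ico (c 0) (c K), q (a n + m) := by
              rw [hpart]; exact Finset.sum_congr rfl (fun k _ => h3 k)
          _ ≤ S := Summable.sum_le_tsum _ (fun n _ => (hqpos _).le) hsum
      have h4 : ∑ k ∈ Finset.Ico k₁ K, q (k + m) ≤ Cq := by
        have : ∑ k ∈ Finset.Ico k₁ K, q (k + m) ≤ ∑ k ∈ Finset.range K, q (k + m) := by
          apply Finset.sum_le_sum_of_subset_of_nonneg
          · intro x hx; exact Finset.mem_range.2 (Finset.mem_Ico.1 hx).2
          · intro k _ _; exact (hqpos _).le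
        exact le_trans this (Summable.sum_le_tsum _ (fun n _ => (hqpos _).le) hCqsum)
      have h5 : ∑ k ∈ Finset.Ico k₁ K, (1/2) * E k = (1/2) * ∑ k ∈ Finset.Ico k₁ K, E k := by
        rw [Finset.mul_sum]
      rw [Finset.sum_add_distrib] at h1
      rw [h5] at h1
      linarith
    -- conclude summability of E, then of the target
    have hEsum : Summable E := by
      have h1 : Summable (fun k => E (k₁ + k)) := by
        apply summable_of_sum_range_le (c := 2 * (S + Cq)) (fun n => hEnonneg _)
        intro K
        have h2 := hbdd (k₁ + K)
        rw [Finset.sum_Ico_eq_sum_range, Nat.add_sub_cancel_left] at h2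
        exact h2
      have h2 : Summable (fun k => E (k + k₁)) := by
        apply h1.congr
        intro k; rw [Nat.add_comm]
      exact (summable_nat_add_iff k₁).1 h2
    have heq : (fun k : ℕ => Real.exp (-((m:ℝ) - 1) * r (k + (m - 1) + 1))) = E := by
      funext k
      show Real.exp (-((m:ℝ) - 1) * r (k + (m - 1) + 1)) = Real.exp (-((m:ℝ) - 1) * r (k + m))
      rw [show k + (m - 1) + 1 = k + m by omega]
    exact (summable_nat_add_iff (m - 1)).1 (by rw [heq]; exact hEsum)
  -- eventual unit steps of a
  have hstep : ∀ᶠ n in atTop, a (n + 1) ≤ a n + 1 := by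
    filter_upwards [hainf.eventually_ge_atTop k₁, eventually_ge_atTop 1] with n han1 hn1
    by_contra hcon
    push_neg at hcon
    have h1 := (hkey n (a n) hn1).1 rfl
    have h2 := (hkey (n+1) (a (n+1)) (by omega)).1 rfl
    have h3 : c (a n + 2) ≤ c (a (n+1)) := hcmono (by omega)
    have h4 : c (a n + 1) < c (a n + 2) := hcgrow (a n + 1) (by omega)
    omega
  -- identical distribution of tail events
  have hident' : ∀ (i k : ℕ), ℙ {ω | k ≤ ξ i ω} = ℙ {ω | k ≤ ξ 0 ω} := by
    intro i k
    exact (hident i).measure_mem_eq (measurableSet_Ici (a := k))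
  -- First Borel-Cantelli: eventually ξ n ≤ a n + m
  have hBC1 : ℙ (limsup (fun n => {ω | a n + (m+1) ≤ ξ n ω}) atTop) = 0 := by
    apply measure_limsup_atTop_eq_zero
    have heq : ∀ n : ℕ, ℙ {ω | a n + (m+1) ≤ ξ n ω} = ENNReal.ofReal (q (a n + (m+1))) := by
      intro n
      rw [hident' n _]
      exact (ENNReal.ofReal_toReal (hfin _)).symm
    rw [tsum_congr heq, ← ENNReal.ofReal_tsum_of_nonneg (fun n => (hqpos _).le) hS1]
    exact ENNReal.ofReal_ne_top
  -- Second Borel-Cantelli : frequently ξ n ≥ a (n+1) + m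
  set B : ℕ → Set Ω := fun n => ξ n ⁻¹' Set.Ici (a (n+1) + m) with hB
  have hBmeas : ∀ n, MeasurableSet (B n) := fun n => (hmeas n) measurableSet_Ici
  have hBindep : iIndepSet B ℙ := by
    rw [iIndepSet_iff_meas_biInter hBmeas]
    intro s
    exact hindep.meas_biInter (fun i _ => ⟨Set.Ici (a (i+1) + m), measurableSet_Ici, rfl⟩)
  have hBsum : ∑' n, ℙ (B n) = ⊤ := by
    by_contra hne
    have h1 : Summable (fun n => (ℙ (B n)).toReal) := ENNReal.summable_toReal hne
    have h2 : (fun n => (ℙ (B n)).toReal) = fun n => q (a (n+1) + m) := by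
      funext n
      show (ℙ {ω | a (n+1) + m ≤ ξ n ω}).toReal = _
      rw [hident' n _]
    rw [h2] at h1
    exact hS2 ((summable_nat_add_iff 1).1 h1)
  have hBC2 : ℙ (limsup B atTop) = 1 := measure_limsup_eq_one hBmeas hBindep hBsum
  -- the "low" events
  set E : ℕ → Set Ω := fun n => {ω | ∀ i, i < n → ξ i ω < a n} with hEdef
  have hEmeas : ∀ n, MeasurableSet (E n) := by
    intro n
    have hEn : E n = ⋂ i ∈ Finset.range n, (ξ i) ⁻¹' (Set.Iio (a n)) := by
      ext ω; simp [hEdef]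
    rw [hEn]
    exact Finset.measurableSet_biInter _ (fun i _ => (hmeas i) measurableSet_Iio)
  have hT01 : ℙ (limsup E atTop) = 0 ∨ ℙ (limsup E atTop) = 1 := by
    apply measure_zero_or_one_of_measurableSet_limsup_atTop
      (fun n => (hmeas n).comap_le) hindep.iIndep
    rw [limsup_eq_iInf_iSup_of_nat, MeasurableSpace.measurableSet_iInf]
    intro j
    have hmeasj : ∀ i, j ≤ i → @Measurable Ω ℕ
        (⨆ i, ⨆ _ : j ≤ i, MeasurableSpace.comap (ξ i) inferInstance) _ (ξ i) := by
      intro i hij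
      apply Measurable.of_comap_le
      exact le_iSup₂ (f := fun i (_ : j ≤ i) => MeasurableSpace.comap (ξ i) inferInstance) i hij
    have hTeq : limsup E atTop
        = {ω | ∀ N, ∃ n, N ≤ n ∧ ∀ i, j ≤ i → i < n → ξ i ω < a n} := by
      ext ω
      rw [mem_limsup_iff_frequently_mem, frequently_atTop]
      constructor
      · intro h N
        obtain ⟨n, hn1, hn2⟩ := h N
        exact ⟨n, hn1, fun i _ hi2 => hn2 i hi2⟩
      · intro h N
        set M := (Finset.range j).sup (fun i => ξ i ω) + 1 with hM
        obtain ⟨N', hN'⟩ := eventually_atTop.1 (hainf.eventually_ge_atTop M)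
        obtain ⟨n, hn1, hn2⟩ := h (max N N')
        refine ⟨n, le_trans (le_max_left _ _) hn1, fun i hi => ?_⟩
        by_cases hij : j ≤ i
        · exact hn2 i hij hi
        · push_neg at hij
          have h1 : ξ i ω < M :=
            Nat.lt_succ_of_le (Finset.le_sup (f := fun i => ξ i ω) (Finset.mem_range.2 hij))
          have h2 : M ≤ a n := hN' n (le_trans (le_max_right _ _) hn1)
          omega
    rw [hTeq]
    have hset : {ω : Ω | ∀ N, ∃ n, N ≤ n ∧ ∀ i, j ≤ i → i < n → ξ i ω < a n}
        = ⋂ N, ⋃ n, ⋃ _ : N ≤ n, ⋂ i, ⋂ _ : j ≤ i, ⋂ _ : i < n, (ξ i) ⁻¹' (Set.Iio (a n)) := by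
      ext ω
      simp only [Set.mem_iInter, Set.mem_iUnion, Set.mem_setOf_eq, Set.mem_preimage,
        Set.mem_Iio, exists_prop]
    rw [hset]
    refine MeasurableSet.iInter (fun N => MeasurableSet.iUnion (fun n =>
      MeasurableSet.iUnion (fun _ => MeasurableSet.iInter (fun i =>
      MeasurableSet.iInter (fun hij => MeasurableSet.iInter (fun _ =>
      hmeasj i hij measurableSet_Iio))))))
  -- lower bound on the probability of the low events along the subsequence c k
  obtain ⟨k₂, hk₂⟩ := eventually_atTop.1 (hq_tendsto.eventually_lt_const
    (by norm_num : (0:ℝ) < 1/2))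
  have hlowbound : ∀ k, k₁ ≤ k → k₂ ≤ k → ENNReal.ofReal (Real.exp (-4)) ≤ ℙ (E (c k)) := by
    intro k hk1 hk2
    have hank : a (c k) = k := hfib k (c k) le_rfl (hcgrow k hk1)
    have hEeq : E (c k) = ⋂ i ∈ Finset.range (c k), (ξ i) ⁻¹' (Set.Iio k) := by
      ext ω; simp [hEdef, hank]
    have hprod : ℙ (E (c k)) = (ℙ ((ξ 0) ⁻¹' (Set.Iio k))) ^ (c k) := by
      rw [hEeq, hindep.meas_biInter (fun i _ => ⟨Set.Iio k, measurableSet_Iio, rfl⟩)]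
      rw [Finset.prod_congr rfl (fun i _ => (hident i).measure_mem_eq measurableSet_Iio)]
      rw [Finset.prod_const, Finset.card_range]
    have htr : (ℙ ((ξ 0) ⁻¹' (Set.Iio k))).toReal = 1 - q k := by
      have hcompl : (ξ 0) ⁻¹' (Set.Iio k) = {ω | k ≤ ξ 0 ω}ᶜ := by
        ext ω; simp [not_le]
      rw [hcompl, measure_compl (hmeasIci 0 k) (hfin _), measure_univ,
        ENNReal.toReal_sub_of_le prob_le_one (by simp), ENNReal.toReal_one]
    rw [hprod, ENNReal.ofReal_le_iff_le_toReal (by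
      exact ENNReal.pow_ne_top (hfin _)), ENNReal.toReal_pow, htr]
    -- real inequality : exp (-4) ≤ (1 - q k)^(c k)
    set x : ℝ := q k with hx
    have hx0 : 0 < x := hqpos k
    have hx2 : x < 1/2 := hk₂ k hk2
    have hn : (c k : ℝ) < 1/x + 1 := hcinv_lt k
    have step1 : Real.exp (-(2*x)) ≤ 1 - x := by
      have h1 : 2*x + 1 ≤ Real.exp (2*x) := Real.add_one_le_exp (2*x)
      rw [Real.exp_neg]
      rw [inv_le_comm₀ (Real.exp_pos _) (by linarith)]
      calc (1 - x)⁻¹ = 1/(1-x) := (one_div _).symm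
        _ ≤ 2*x + 1 := by
          rw [div_le_iff₀ (by linarith)]
          nlinarith
        _ ≤ Real.exp (2*x) := h1
    have step2 : Real.exp (-4) ≤ Real.exp ((c k : ℝ) * (-(2*x))) := by
      apply Real.exp_le_exp.2
      have hxc : x * (c k : ℝ) < 1 + x := by
        have := mul_lt_mul_of_pos_left hn hx0
        have hxx : x * (1/x + 1) = 1 + x := by field_simp
        linarith [hxx ▸ this]
      nlinarith
    have step3 : Real.exp ((c k : ℝ) * (-(2*x))) = (Real.exp (-(2*x))) ^ (c k) :=
      Real.exp_nat_mul _ _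
    have step4 : (Real.exp (-(2*x))) ^ (c k) ≤ (1 - x) ^ (c k) :=
      pow_le_pow_left₀ (Real.exp_pos _).le step1 _
    calc Real.exp (-4) ≤ Real.exp ((c k : ℝ) * (-(2*x))) := step2
      _ = (Real.exp (-(2*x))) ^ (c k) := step3
      _ ≤ (1 - x) ^ (c k) := step4
  -- hence the low event happens infinitely often a.s.
  have hT1 : ℙ (limsup E atTop) = 1 := by
    rcases hT01 with h0 | h1
    · exfalso
      have hUmeas : ∀ N : ℕ, MeasurableSet (⋃ n, ⋃ _ : N ≤ n, E n) := fun N =>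
        MeasurableSet.iUnion (fun n => MeasurableSet.iUnion (fun _ => hEmeas n))
      have hlim : limsup E atTop = ⋂ N, ⋃ n, ⋃ _ : N ≤ n, E n :=
        limsup_eq_iInf_iSup_of_nat
      have hanti : Antitone (fun N => ⋃ n, ⋃ _ : N ≤ n, E n) := by
        intro N N' hNN' ω hω
        simp only [Set.mem_iUnion] at hω ⊢
        obtain ⟨n, hn, h⟩ := hω
        exact ⟨n, le_trans hNN' hn, h⟩
      have htend : Tendsto (fun N => ℙ (⋃ n, ⋃ _ : N ≤ n, E n)) atTop (nhds 0) := by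
        have ht := tendsto_measure_iInter_atTop (μ := ℙ)
          (fun N => (hUmeas N).nullMeasurableSet) hanti ⟨0, hfin _⟩
        rw [← hlim, h0] at ht
        exact ht
      obtain ⟨N, hN⟩ := eventually_atTop.1 (htend.eventually_lt_const
        (ENNReal.ofReal_pos.2 (Real.exp_pos (-4))))
      obtain ⟨K, hK⟩ := hcunbdd N
      set k := max K (max k₁ k₂) with hk
      have hck : N ≤ c k := le_trans hK (hcmono (le_max_left _ _))
      have hsub : E (c k) ⊆ ⋃ n, ⋃ _ : N ≤ n, E n := fun ω hω =>
        Set.mem_iUnion.2 ⟨c k, Set.mem_iUnion.2 ⟨hck, hω⟩⟩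
      have hcontra := lt_of_le_of_lt
        (le_trans (hlowbound k (le_trans (le_max_left _ _) (le_max_right _ _))
          (le_trans (le_max_right _ _) (le_max_right _ _))) (measure_mono hsub))
        (hN N le_rfl)
      exact lt_irrefl _ hcontra
    · exact h1
  -- assemble the almost sure good set
  set A : ℕ → Set Ω := fun n => {ω | a n + (m + 1) ≤ ξ n ω} with hA
  have hAmeas : ∀ n, MeasurableSet (A n) := fun n => (hmeas n) measurableSet_Ici
  have hint : ∀ s t : Set Ω, MeasurableSet s → MeasurableSet t →
      ℙ s = 1 → ℙ t = 1 → ℙ (s ∩ t) = 1 := by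
    intro s t hs ht h1 h2
    rw [← prob_compl_eq_zero_iff (hs.inter ht), Set.compl_inter]
    refine le_antisymm (le_trans (measure_union_le _ _) ?_) zero_le
    rw [(prob_compl_eq_zero_iff hs).2 h1, (prob_compl_eq_zero_iff ht).2 h2, add_zero]
  have hG1 : ℙ ((limsup A atTop)ᶜ) = 1 := by
    rw [measure_compl (MeasurableSet.measurableSet_limsup hAmeas) (hfin _), measure_univ,
      hBC1, tsub_zero]
  set Gset : Set Ω := (limsup A atTop)ᶜ ∩ (limsup B atTop ∩ limsup E atTop) with hG
  have hGfull : ℙ Gset = 1 := by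
    refine hint _ _ (MeasurableSet.measurableSet_limsup hAmeas).compl
      ((MeasurableSet.measurableSet_limsup hBmeas).inter (MeasurableSet.measurableSet_limsup hEmeas)) hG1 ?_
    exact hint _ _ (MeasurableSet.measurableSet_limsup hBmeas) (MeasurableSet.measurableSet_limsup hEmeas) hBC2 hT1
  -- pointwise conclusions on the good set
  have hmain : ∀ ω, ω ∈ Gset →
      (limsup (fun n => (((Finset.range n).sup fun i => ξ i ω : ℕ) : ℤ) - (a n : ℤ))
        atTop = (m : ℤ)) ∧
      (∀ l : ℤ, -1 ≤ l → l ≤ (m : ℤ) → ∃ᶠ n in atTop,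
        (((Finset.range n).sup fun i => ξ i ω : ℕ) : ℤ) = (a n : ℤ) + l) := by
    intro ω hω
    obtain ⟨hω1, hω2, hω3⟩ := hω
    set d : ℕ → ℤ :=
      fun n => (((Finset.range n).sup fun i => ξ i ω : ℕ) : ℤ) - (a n : ℤ) with hd
    have hev : ∀ᶠ n in atTop, ξ n ω ≤ a n + m := by
      have hnf : ¬ ∃ᶠ n in atTop, ω ∈ A n := fun h => hω1 (mem_limsup_iff_frequently_mem.2 h)
      rw [not_frequently] at hnf
      filter_upwards [hnf] with n hn
      simp only [hA, Set.mem_setOf_eq] at hn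
      omega
    have fact1 : ∀ᶠ n in atTop, d n ≤ (m : ℤ) := by
      obtain ⟨N₀, hN₀⟩ := eventually_atTop.1 (hev.and (eventually_ge_atTop 1))
      set M := (Finset.range N₀).sup (fun i => ξ i ω) with hM
      obtain ⟨N₁, hN₁⟩ := eventually_atTop.1 (hainf.eventually_ge_atTop M)
      rw [eventually_atTop]
      refine ⟨max N₀ N₁, fun n hn => ?_⟩
      have hsup : ((Finset.range n).sup fun i => ξ i ω) ≤ a n + m := by
        apply Finset.sup_le
        intro i hi
        rcases lt_or_ge i N₀ with hiN | hiN
        · have h1 : ξ i ω ≤ M := Finset.le_sup (f := fun i => ξ i ω) (Finset.mem_range.2 hiN)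
          have h2 : M ≤ a n := hN₁ n (le_trans (le_max_right _ _) hn)
          omega
        · have h1 := (hN₀ i hiN).1
          have h2 : a i ≤ a n := hamono i n (hN₀ i hiN).2
            (le_trans (le_of_lt (Finset.mem_range.1 hi)) le_rfl)
          omega
      simp only [hd]; omega
    have fact2 : ∃ᶠ n in atTop, (m : ℤ) ≤ d n := by
      rw [frequently_atTop]
      intro N
      obtain ⟨n, hn, hmem⟩ := frequently_atTop.1 (mem_limsup_iff_frequently_mem.1 hω2) N
      refine ⟨n + 1, by omega, ?_⟩
      have h1 : a (n + 1) + m ≤ ξ n ω := hmem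
      have h2 : ξ n ω ≤ (Finset.range (n + 1)).sup fun i => ξ i ω :=
        Finset.le_sup (f := fun i => ξ i ω) (Finset.mem_range.2 (by omega))
      simp only [hd]; omega
    have fact3 : ∃ᶠ n in atTop, d n ≤ -1 := by
      rw [frequently_atTop]
      intro N
      obtain ⟨n, hn, hmem⟩ :=
        frequently_atTop.1 (mem_limsup_iff_frequently_mem.1 hω3) (max N 1)
      have hn1 : 1 ≤ n := le_trans (le_max_right _ _) hn
      have hall : ∀ i, i < n → ξ i ω < a n := hmem
      have hsup : ((Finset.range n).sup fun i => ξ i ω) < a n := by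
        have ha0 : 0 < a n := lt_of_le_of_lt (Nat.zero_le _) (hall 0 hn1)
        refine (Finset.sup_lt_iff ha0).2 ?_
        intro i hi; exact hall i (Finset.mem_range.1 hi)
      exact ⟨n, le_trans (le_max_left _ _) hn, by simp only [hd]; omega⟩
    have fact4 : ∀ᶠ n in atTop, d n - 1 ≤ d (n + 1) := by
      filter_upwards [hstep] with n hs
      have hmono : ((Finset.range n).sup fun i => ξ i ω)
          ≤ ((Finset.range (n + 1)).sup fun i => ξ i ω) :=
        Finset.sup_mono (Finset.range_subset_range.2 (by omega))
      simp only [hd]; omega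
    constructor
    · refine le_antisymm ?_ ?_
      · exact limsup_le_of_le (IsCoboundedUnder.of_frequently_ge fact2) fact1
      · exact le_limsup_of_frequently_le fact2 ⟨(m : ℤ), eventually_map.2 fact1⟩
    · intro l hl1 hl2
      rw [frequently_atTop]
      intro N
      obtain ⟨N₄, hN₄⟩ := eventually_atTop.1 fact4
      obtain ⟨n₁, hn₁, hdn₁⟩ := frequently_atTop.1 fact2 (max N N₄)
      obtain ⟨n₂, hn₂, hdn₂⟩ := frequently_atTop.1 fact3 n₁
      obtain ⟨n, hna, hnb, hnc⟩ := ivtDown (n₂ - n₁) d l n₁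
        (fun n hn => hN₄ n (le_trans (le_trans (le_max_right _ _) hn₁) hn))
        (le_trans hl2 hdn₁)
        (by rw [show n₁ + (n₂ - n₁) = n₂ by omega]; omega)
      refine ⟨n, le_trans (le_trans (le_max_left _ _) hn₁) hna, ?_⟩
      simp only [hd] at hnc
      omega
  constructor
  · have hsub : Gset ⊆ {ω | limsup
        (fun n => (((Finset.range n).sup fun i => ξ i ω : ℕ) : ℤ) - (a n : ℤ))
        atTop = (m : ℤ)} := fun ω hω => (hmain ω hω).1
    exact le_antisymm prob_le_one (hGfull ▸ measure_mono hsub)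
  · intro l hl1 hl2
    have hsub : Gset ⊆ limsup (fun n =>
        {ω | (((Finset.range n).sup fun i => ξ i ω : ℕ) : ℤ) = (a n : ℤ) + l}) atTop :=
      fun ω hω => mem_limsup_iff_frequently_mem.2 ((hmain ω hω).2 l hl1 hl2)
    exact le_antisymm prob_le_one (hGfull ▸ measure_mono hsub)
end

section
/- Let ξ, ξ_1, ξ_2, … be i.i.d. ℕ-valued with positive point masses, ξ̄_n the running maximum, r(n) = R(n) - R(n-1) monotone with r(n) → ∞, a_n = max{k : P(ξ ≥ k) ≥ 1/n}. Then P(ξ̄_n ≤ a_n - 1 infinitely often) = 1. -/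
open MeasureTheory ProbabilityTheory Filter
open scoped ENNReal

lemma exp_neg_two_mul_le' {x : ℝ} (hx0 : 0 ≤ x) (hx : x ≤ 1/2) :
    Real.exp (-(2*x)) ≤ 1 - x := by
  have h1 : (1:ℝ) + 2*x ≤ Real.exp (2*x) := by
    have := Real.add_one_le_exp (2*x); linarith
  have h2 : (0:ℝ) < 1 + 2*x := by linarith
  have h3 : Real.exp (-(2*x)) = 1 / Real.exp (2*x) := by
    rw [Real.exp_neg]; ring
  rw [h3]
  have h4 : 1 / Real.exp (2*x) ≤ 1 / (1 + 2*x) :=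
    one_div_le_one_div_of_le h2 h1
  have h5 : 1 / (1 + 2*x) ≤ 1 - x := by
    rw [div_le_iff₀ h2]; nlinarith
  linarith

lemma exp_neg_three_le_pow' {x : ℝ} (M : ℕ) (hx0 : 0 < x) (hx : x ≤ 1/2)
    (hM : (M:ℝ) ≤ 1/x + 1) : Real.exp (-3) ≤ (1-x)^M := by
  have h1x : (0:ℝ) < 1 - x := by linarith
  have hlog : -(2*x) ≤ Real.log (1-x) := by
    have := Real.log_le_log (Real.exp_pos _) (exp_neg_two_mul_le' hx0.le hx)
    rwa [Real.log_exp] at this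
  have hlog0 : Real.log (1-x) ≤ 0 := Real.log_nonpos (by linarith) (by linarith)
  have hpow : ((1:ℝ)-x)^M = Real.exp ((M:ℝ) * Real.log (1-x)) := by
    rw [Real.exp_nat_mul, Real.exp_log h1x]
  rw [hpow]
  apply Real.exp_le_exp.mpr
  have step1 : (1/x + 1) * Real.log (1-x) ≤ (M:ℝ) * Real.log (1-x) :=
    mul_le_mul_of_nonpos_right hM hlog0
  have step2 : (1/x + 1) * (-(2*x)) ≤ (1/x + 1) * Real.log (1-x) := by
    apply mul_le_mul_of_nonneg_left hlog
    positivity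
  have step3 : (1/x + 1) * (-(2*x)) = -(2 + 2*x) := by
    field_simp
  nlinarith

lemma freq_transfer' {u : ℕ → ℕ} (hu : Filter.Tendsto u Filter.atTop Filter.atTop)
    {P : ℕ → Prop} (h : ∃ᶠ j in Filter.atTop, P (u j)) :
    ∃ᶠ n in Filter.atTop, P n := by
  rw [Filter.frequently_atTop] at h ⊢
  intro N
  obtain ⟨J, hJ⟩ := (hu.eventually_ge_atTop N).exists_forall_of_atTop
  obtain ⟨j, hjJ, hPj⟩ := h J
  exact ⟨u j, hJ j hjJ, hPj⟩

set_option maxHeartbeats 2000000 in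
/-- Theorem 2(i): `P(ξ̄ₙ ≤ aₙ - 1  i.o.) = 1`. -/
theorem max_le_a_sub_one_io_one {Ω : Type*} [MeasureSpace Ω]
    [IsProbabilityMeasure (ℙ : Measure Ω)] (ξ : ℕ → Ω → ℕ)
    (hmeas : ∀ i, Measurable (ξ i))
    (hindep : iIndepFun ξ ℙ)
    (hident : ∀ i, IdentDistrib (ξ i) (ξ 0) ℙ ℙ)
    (hpos : ∀ k : ℕ, 0 < ℙ {ω | ξ 0 ω = k})
    (R r : ℕ → ℝ)
    (hR : ∀ n, R n = -Real.log (ℙ {ω | n ≤ ξ 0 ω}).toReal)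
    (hr : ∀ n : ℕ, 1 ≤ n → r n = R n - R (n - 1))
    (hrmono : Monotone r)
    (hrinf : Tendsto r atTop atTop)
    (a : ℕ → ℕ)
    (ha : ∀ n : ℕ, 1 ≤ n →
      IsGreatest {k : ℕ | 1 / (n : ℝ) ≤ (ℙ {ω | k ≤ ξ 0 ω}).toReal} (a n)) :
    ℙ (limsup (fun n =>
        {ω | (((Finset.range n).sup fun i => ξ i ω : ℕ) : ℤ) ≤ (a n : ℤ) - 1})
      atTop) = 1 := by
  classical
  set A : ℕ → Set Ω := fun n =>
      {ω | (((Finset.range n).sup fun i => ξ i ω : ℕ) : ℤ) ≤ (a n : ℤ) - 1} with hA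
  -- tail sets and tail probabilities
  let T : ℕ → Set Ω := fun k => {ω | k ≤ ξ 0 ω}
  let p : ℕ → ℝ := fun k => (ℙ (T k)).toReal
  have hTmeas : ∀ k, MeasurableSet (T k) := fun k => (hmeas 0) measurableSet_Ici
  have hTne : ∀ k, ℙ (T k) ≠ ⊤ := fun k => measure_ne_top _ _
  have hTpos : ∀ k, 0 < ℙ (T k) := by
    intro k
    refine lt_of_lt_of_le (hpos k) (measure_mono ?_)
    intro ω hω
    have hω' : ξ 0 ω = k := hω
    show k ≤ ξ 0 ω
    omega
  have hppos : ∀ k, 0 < p k := fun k => ENNReal.toReal_pos (hTpos k).ne' (hTne k)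
  have hple : ∀ k, p k ≤ 1 := by
    intro k
    have h1 : ℙ (T k) ≤ 1 := prob_le_one
    calc p k ≤ (1 : ℝ≥0∞).toReal := ENNReal.toReal_mono (by simp) h1
      _ = 1 := by simp
  have hpanti : Antitone p := by
    apply antitone_nat_of_succ_le
    intro k
    refine ENNReal.toReal_mono (hTne k) (measure_mono ?_)
    intro ω hω
    have hω' : k + 1 ≤ ξ 0 ω := hω
    show k ≤ ξ 0 ω
    omega
  -- geometric decay of tail probabilities: p (k+1) ≤ p k / 4 for large k
  obtain ⟨K1, hK1⟩ : ∃ K1, ∀ k ≥ K1, 2 ≤ r k := (hrinf.eventually_ge_atTop 2).exists_forall_of_atTop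
  have hquart : ∀ k, K1 ≤ k + 1 → p (k+1) ≤ p k / 4 := by
    intro k hk
    have h2 : 2 ≤ r (k+1) := hK1 _ hk
    rw [hr (k+1) (by omega)] at h2
    simp only [Nat.add_sub_cancel] at h2
    rw [hR, hR] at h2
    have hlog : 2 ≤ Real.log (p k) - Real.log (p (k+1)) := by
      have : R (k+1) = R (k+1) := rfl
      linarith [h2]
    have hdiv : Real.log (p k / p (k+1)) = Real.log (p k) - Real.log (p (k+1)) :=
      Real.log_div (hppos k).ne' (hppos (k+1)).ne'
    have hexp : Real.exp 2 ≤ p k / p (k+1) := by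
      rw [← hdiv] at hlog
      have hq : 0 < p k / p (k+1) := div_pos (hppos k) (hppos (k+1))
      exact (Real.le_log_iff_exp_le hq).mp hlog
    have he4 : (4:ℝ) ≤ Real.exp 2 := by
      have h1 : (2:ℝ) ≤ Real.exp 1 := by
        have := Real.add_one_le_exp (1:ℝ); linarith
      have : Real.exp 2 = Real.exp 1 * Real.exp 1 := by
        rw [← Real.exp_add]; norm_num
      nlinarith [Real.exp_pos (1:ℝ)]
    have : (4:ℝ) ≤ p k / p (k+1) := le_trans he4 hexp
    rw [le_div_iff₀ (hppos (k+1))] at this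
    linarith
  -- p gets arbitrarily small
  have hgeo : ∀ i, p (K1 + i) ≤ p K1 * (1/4)^i := by
    intro i
    induction i with
    | zero => simp
    | succ i ih =>
      have h1 : p (K1 + i + 1) ≤ p (K1 + i) / 4 := hquart _ (by omega)
      have h2 : K1 + (i+1) = K1 + i + 1 := by omega
      rw [h2]
      calc p (K1 + i + 1) ≤ p (K1 + i) / 4 := h1
        _ ≤ (p K1 * (1/4)^i) / 4 := by linarith
        _ = p K1 * (1/4)^(i+1) := by ring
  have hsmall : ∀ (c : ℕ) (ε : ℝ), 0 < ε → ∃ k, c < k ∧ p k ≤ ε := by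
    intro c ε hε
    obtain ⟨i, hi⟩ : ∃ i : ℕ, p K1 * (1/4)^i < ε := by
      have h4 : |(1/4 : ℝ)| < 1 := by rw [abs_of_pos]; norm_num; norm_num
      have := tendsto_pow_atTop_nhds_zero_of_abs_lt_one h4
      have h2 : Tendsto (fun i : ℕ => p K1 * (1/4)^i) atTop (nhds 0) := by
        simpa using this.const_mul (p K1)
      obtain ⟨i, hi⟩ := ((h2.eventually (gt_mem_nhds hε)).exists)
      exact ⟨i, hi⟩
    refine ⟨max (K1 + i) (c + 1), by omega, ?_⟩
    calc p (max (K1 + i) (c+1)) ≤ p (K1 + i) := hpanti (le_max_left _ _)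
      _ ≤ p K1 * (1/4)^i := hgeo i
      _ ≤ ε := hi.le
  obtain ⟨k2, _, hk2⟩ := hsmall 0 (1/2) (by norm_num)
  set K := max K1 k2 with hK
  have hhalf : ∀ k, K ≤ k → p k ≤ 1/2 := fun k hk =>
    le_trans (hpanti (le_trans (le_max_right _ _) hk)) hk2
  have hquart' : ∀ k, K ≤ k → p (k+1) ≤ p k / 4 := fun k hk =>
    hquart k (by omega)
  -- the index n(k) where level k is first reachable
  let nn : ℕ → ℕ := fun k => ⌈(p k)⁻¹⌉₊
  have hnn1 : ∀ k, 1 ≤ nn k := fun k =>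
    Nat.one_le_ceil_iff.mpr (inv_pos.mpr (hppos k))
  have hnnge : ∀ k, (p k)⁻¹ ≤ (nn k : ℝ) := fun k => Nat.le_ceil _
  have hnnle : ∀ k, (nn k : ℝ) ≤ (p k)⁻¹ + 1 := by
    intro k
    have := Nat.ceil_lt_add_one (le_of_lt (inv_pos.mpr (hppos k)))
    exact le_of_lt this
  have hmem : ∀ k, 1 / (nn k : ℝ) ≤ p k := by
    intro k
    have h0 : (0:ℝ) < (p k)⁻¹ := inv_pos.mpr (hppos k)
    have h1 := one_div_le_one_div_of_le h0 (hnnge k)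
    have h2 : 1 / ((p k)⁻¹) = p k := by rw [one_div, inv_inv]
    rwa [h2] at h1
  -- a (nn k) = k for K ≤ k
  have han : ∀ k, K ≤ k → a (nn k) = k := by
    intro k hk
    have hg := ha (nn k) (hnn1 k)
    have hup : k ≤ a (nn k) := hg.2 (hmem k)
    have hlow : ¬ (k + 1 ≤ a (nn k)) := by
      intro hcon
      have h1 : 1 / (nn k : ℝ) ≤ p (a (nn k)) := hg.1
      have h2 : p (a (nn k)) ≤ p (k+1) := hpanti hcon
      have h3 : p (k+1) ≤ p k / 4 := hquart' k hk
      have h4 : p k ≤ 1/2 := hhalf k hk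
      have h5 : 1 / (nn k : ℝ) ≤ p k / 4 := by linarith
      have h6 : (0:ℝ) < nn k := by exact_mod_cast hnn1 k
      rw [div_le_iff₀ h6] at h5
      have h7 : (nn k : ℝ) ≤ (p k)⁻¹ + 1 := hnnle k
      have hp0 := hppos k
      have h8 : (p k / 4) * (nn k : ℝ) ≤ (p k / 4) * ((p k)⁻¹ + 1) := by
        apply mul_le_mul_of_nonneg_left h7; positivity
      have h9 : (p k / 4) * ((p k)⁻¹ + 1) = (1 + p k) / 4 := by
        field_simp
      nlinarith
    omega
  -- the recursive subsequence of levels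
  have hsel : ∀ (c j : ℕ), ∃ k, c < k ∧ p k ≤ p c * (1/2)^(j+1) := by
    intro c j
    exact hsmall c _ (mul_pos (hppos c) (by positivity))
  choose f hf1 hf2 using hsel
  let ks : ℕ → ℕ := fun j => Nat.rec K (fun j kj => f kj j) j
  have hksS : ∀ j, ks (j+1) = f (ks j) j := fun j => rfl
  have hkslt : ∀ j, ks j < ks (j+1) := fun j => hf1 _ _
  have hksdec : ∀ j, p (ks (j+1)) ≤ p (ks j) * (1/2)^(j+1) := fun j => hf2 _ _
  have hksK : ∀ j, K ≤ ks j := by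
    intro j
    induction j with
    | zero => exact le_refl K
    | succ j ih => exact le_trans ih (le_of_lt (hkslt j))
  -- the block boundaries
  let m : ℕ → ℕ := fun j => nn (ks j)
  have hm1 : ∀ j, 1 ≤ m j := fun j => hnn1 _
  have hmlt : ∀ j, m j < m (j+1) := by
    intro j
    have hp1 := hppos (ks j)
    have hp2 := hppos (ks (j+1))
    have hh : p (ks j) ≤ 1/2 := hhalf _ (hksK j)
    have hdec : p (ks (j+1)) ≤ p (ks j) / 2 := by
      have h1 : ((1:ℝ)/2)^(j+1) ≤ 1/2 := by
        apply pow_le_of_le_one (by norm_num) (by norm_num) (by simp)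
      have := hksdec j
      nlinarith
    have hx : (p (ks j))⁻¹ + 2 ≤ (p (ks (j+1)))⁻¹ := by
      have h2 : 1 / (p (ks j) / 2) ≤ 1 / p (ks (j+1)) :=
        one_div_le_one_div_of_le hp2 hdec
      have h2' : 1 / (p (ks j) / 2) = 2 * (p (ks j))⁻¹ := by
        rw [one_div, inv_div, div_eq_mul_inv]
      rw [h2', one_div] at h2
      have h3 : (2:ℝ) ≤ (p (ks j))⁻¹ := by
        rw [show (2:ℝ) = ((1:ℝ)/2)⁻¹ by norm_num]
        exact inv_anti₀ hp1 hh
      linarith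
    have : (m j : ℝ) < (m (j+1) : ℝ) := by
      calc (m j : ℝ) ≤ (p (ks j))⁻¹ + 1 := hnnle _
        _ < (p (ks j))⁻¹ + 2 := by linarith
        _ ≤ (p (ks (j+1)))⁻¹ := hx
        _ ≤ (m (j+1) : ℝ) := hnnge _
    exact_mod_cast this
  have hmst : StrictMono m := strictMono_nat_of_lt_succ hmlt
  have hmge : ∀ j, (p (ks j))⁻¹ ≤ (m j : ℝ) := fun j => hnnge _
  have hmle : ∀ j, (m j : ℝ) ≤ (p (ks j))⁻¹ + 1 := fun j => hnnle _
  have hmaeq : ∀ j, a (m j) = ks j := fun j => han _ (hksK j)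
  clear hksS
  clear_value ks m
  -- the basic events
  let E : ℕ → ℕ → Set Ω := fun i k => {ω | ξ i ω < k}
  have hEmeas : ∀ i k, MeasurableSet (E i k) := fun i k => (hmeas i) measurableSet_Iio
  have hEident : ∀ i k, ℙ (E i k) = ℙ (E 0 k) := fun i k =>
    (hident i).measure_mem_eq measurableSet_Iio
  have hEcompl : ∀ k, ℙ (E 0 k) = 1 - ℙ (T k) := by
    intro k
    have hE : E 0 k = (T k)ᶜ := by
      ext ω
      show ξ 0 ω < k ↔ ¬ k ≤ ξ 0 ω
      exact not_le.symm
    rw [hE, measure_compl (hTmeas k) (hTne k), measure_univ]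
  have prodForm : ∀ (S : Finset ℕ) (b : ℕ → ℕ),
      ℙ (⋂ i ∈ S, E i (b i)) = ∏ i ∈ S, ℙ (E 0 (b i)) := by
    intro S b
    rw [hindep.meas_biInter (S := S) (s := fun i => E i (b i))
      (fun i _ => ⟨Set.Iio (b i), measurableSet_Iio, rfl⟩)]
    exact Finset.prod_congr rfl fun i _ => hEident i (b i)
  -- probability that one variable stays below level k, as ofReal
  have hEof : ∀ k, ℙ (E 0 k) = ENNReal.ofReal (1 - p k) := by
    intro k
    rw [hEcompl k]
    have h1 : ℙ (T k) = ENNReal.ofReal (p k) := (ENNReal.ofReal_toReal (hTne k)).symm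
    rw [h1, ← ENNReal.ofReal_one, ← ENNReal.ofReal_sub _ (le_of_lt (hppos k))]
  -- the block events
  let C : ℕ → Set Ω := fun j => ⋂ i ∈ Finset.Ico (m j) (m (j+1)), E i (ks (j+1))
  have hCmeas : ∀ j, MeasurableSet (C j) :=
    fun j => Finset.measurableSet_biInter _ fun i _ => hEmeas i _
  have measC : ∀ j, ℙ (C j) = ℙ (E 0 (ks (j+1))) ^ (m (j+1) - m j) := by
    intro j
    rw [show C j = ⋂ i ∈ Finset.Ico (m j) (m (j+1)), E i ((fun _ => ks (j+1)) i) from rfl,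
      prodForm, Finset.prod_const, Nat.card_Ico]
  have hClb : ∀ j, ENNReal.ofReal (Real.exp (-3)) ≤ ℙ (C j) := by
    intro j
    have hx0 : 0 < p (ks (j+1)) := hppos _
    have hx : p (ks (j+1)) ≤ 1/2 := hhalf _ (hksK (j+1))
    have hM : ((m (j+1) - m j : ℕ) : ℝ) ≤ 1 / p (ks (j+1)) + 1 := by
      have h1 : ((m (j+1) - m j : ℕ) : ℝ) ≤ (m (j+1) : ℝ) := by
        exact_mod_cast Nat.sub_le _ _
      have h2 : (m (j+1) : ℝ) ≤ (p (ks (j+1)))⁻¹ + 1 := hmle _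
      rw [one_div]
      linarith
    rw [measC j, hEof, ← ENNReal.ofReal_pow (by linarith)]
    exact ENNReal.ofReal_le_ofReal (exp_neg_three_le_pow' _ hx0 hx hM)
  have hCsum : ∑' j, ℙ (C j) = ⊤ := by
    rw [eq_top_iff]
    calc (⊤ : ℝ≥0∞) = ∑' (_ : ℕ), ENNReal.ofReal (Real.exp (-3)) :=
          (ENNReal.tsum_const_eq_top_of_ne_zero
            (ENNReal.ofReal_pos.mpr (Real.exp_pos _)).ne').symm
      _ ≤ ∑' j, ℙ (C j) := ENNReal.tsum_le_tsum hClb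
  have hCdef : C = fun j => ⋂ i ∈ Finset.Ico (m j) (m (j+1)), E i (ks (j+1)) := rfl
  have hEdef : E = fun i k => {ω | ξ i ω < k} := rfl
  -- independence of the block events
  have hex : ∀ i : ℕ, ∃ j, i < m (j+1) := fun i =>
    ⟨i, lt_of_lt_of_le (Nat.lt_succ_self i) hmst.le_apply⟩
  let J : ℕ → ℕ := fun i => Nat.find (hex i)
  let b : ℕ → ℕ := fun i => ks (J i + 1)
  have hb : ∀ j i, i ∈ Finset.Ico (m j) (m (j+1)) → b i = ks (j+1) := by
    intro j i hi
    rw [Finset.mem_Ico] at hi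
    have hJ : J i = j := by
      rw [show J i = Nat.find (hex i) from rfl, Nat.find_eq_iff]
      refine ⟨hi.2, fun j' hj' => not_lt.mpr (le_trans (hmst.monotone (by omega : j'+1 ≤ j)) hi.1)⟩
    show ks (J i + 1) = ks (j + 1)
    rw [hJ]
  clear_value J b
  have hCb : ∀ j, C j = ⋂ i ∈ Finset.Ico (m j) (m (j+1)), E i (b i) := by
    intro j
    rw [hCdef]
    exact Set.iInter₂_congr fun i hi => by rw [hb j i hi]
  have hdisj : ∀ j j', j ≠ j' →
      Disjoint (Finset.Ico (m j) (m (j+1))) (Finset.Ico (m j') (m (j'+1))) := by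
    intro j j' hne
    rw [Finset.disjoint_left]
    intro i hi hi'
    rw [Finset.mem_Ico] at hi hi'
    rcases lt_or_gt_of_ne hne with h | h
    · have : m (j+1) ≤ m j' := hmst.monotone (by omega)
      omega
    · have : m (j'+1) ≤ m j := hmst.monotone (by omega)
      omega
  have indepC : iIndepSet C ℙ := by
    rw [iIndepSet_iff_meas_biInter hCmeas]
    intro t
    have hU : (⋂ j ∈ t, C j)
        = ⋂ i ∈ t.biUnion (fun j => Finset.Ico (m j) (m (j+1))), E i (b i) := by
      ext ω
      simp only [hCdef, hEdef, Set.mem_iInter, Set.mem_setOf_eq, Finset.mem_biUnion]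
      constructor
      · rintro h i ⟨j, hjt, hij⟩
        rw [hb j i hij]
        exact h j hjt i hij
      · intro h j hjt i hij
        have := h i ⟨j, hjt, hij⟩
        rwa [hb j i hij] at this
    rw [hU, prodForm, Finset.prod_biUnion (fun j hj j' hj' hne => hdisj j j' hne)]
    refine Finset.prod_congr rfl fun j hjt => ?_
    rw [hCb j, prodForm]
  have hC1 : ℙ (limsup C atTop) = 1 := measure_limsup_eq_one hCmeas indepC hCsum
  -- the events controlling the initial segment
  let D : ℕ → Set Ω := fun j => ⋂ i ∈ Finset.range (m j), E i (ks (j+1))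
  have hDdef : D = fun j => ⋂ i ∈ Finset.range (m j), E i (ks (j+1)) := rfl
  have hTiident : ∀ i k, ℙ {ω | k ≤ ξ i ω} = ℙ (T k) := fun i k =>
    (hident i).measure_mem_eq measurableSet_Ici
  have hDcompl_le : ∀ j, ℙ ((D j)ᶜ) ≤ (m j : ℝ≥0∞) * ℙ (T (ks (j+1))) := by
    intro j
    have h1 : (D j)ᶜ = ⋃ i ∈ Finset.range (m j), (E i (ks (j+1)))ᶜ := by
      rw [hDdef]
      simp [Set.compl_iInter]
    rw [h1]
    calc ℙ (⋃ i ∈ Finset.range (m j), (E i (ks (j+1)))ᶜ)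
        ≤ ∑ i ∈ Finset.range (m j), ℙ ((E i (ks (j+1)))ᶜ) :=
          measure_biUnion_finset_le _ _
      _ = ∑ i ∈ Finset.range (m j), ℙ (T (ks (j+1))) := by
          refine Finset.sum_congr rfl fun i _ => ?_
          have h2 : (E i (ks (j+1)))ᶜ = {ω | ks (j+1) ≤ ξ i ω} := by
            ext ω
            show ¬ ξ i ω < _ ↔ _
            exact not_lt
          rw [h2, hTiident]
      _ = (m j : ℝ≥0∞) * ℙ (T (ks (j+1))) := by
          rw [Finset.sum_const, Finset.card_range, nsmul_eq_mul]
  have hDgeo : ∀ j, ℙ ((D j)ᶜ) ≤ ENNReal.ofReal ((1/2)^j) := by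
    intro j
    refine le_trans (hDcompl_le j) ?_
    have hTof : ℙ (T (ks (j+1))) = ENNReal.ofReal (p (ks (j+1))) :=
      (ENNReal.ofReal_toReal (hTne _)).symm
    rw [hTof, ← ENNReal.ofReal_natCast (m j), ← ENNReal.ofReal_mul (by positivity)]
    apply ENNReal.ofReal_le_ofReal
    have hp1 := hppos (ks j)
    have hp2 := hppos (ks (j+1))
    have hm : (m j : ℝ) ≤ (p (ks j))⁻¹ + 1 := hmle _
    have hd := hksdec j
    have hb0 : (0:ℝ) ≤ (p (ks j))⁻¹ + 1 := by
      have := inv_pos.mpr hp1; linarith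
    have h1 : (m j : ℝ) * p (ks (j+1)) ≤ ((p (ks j))⁻¹ + 1) * (p (ks j) * (1/2)^(j+1)) :=
      mul_le_mul hm hd (le_of_lt hp2) hb0
    have h2 : ((p (ks j))⁻¹ + 1) * (p (ks j) * (1/2)^(j+1)) = (1 + p (ks j)) * (1/2)^(j+1) := by
      field_simp
    have h3 : ((1:ℝ)/2)^j = 2 * (1/2)^(j+1) := by
      rw [pow_succ]; ring
    have h4 : (0:ℝ) ≤ (1/2:ℝ)^(j+1) := by positivity
    have h5 : p (ks j) ≤ 1/2 := hhalf _ (hksK j)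
    nlinarith
  have hgeomsum : (∑' j : ℕ, ENNReal.ofReal ((1/2:ℝ)^j)) ≠ ⊤ := by
    have h1 : ∀ j : ℕ, ENNReal.ofReal ((1/2:ℝ)^j) = (ENNReal.ofReal (1/2))^j :=
      fun j => ENNReal.ofReal_pow (by norm_num) j
    rw [tsum_congr h1, ENNReal.tsum_geometric]
    refine ENNReal.inv_ne_top.mpr ?_
    have h2 : ENNReal.ofReal (1/2) < 1 := ENNReal.ofReal_lt_one.mpr (by norm_num)
    exact (tsub_pos_iff_lt.mpr h2).ne'
  have hDsum : ∑' j, ℙ ((D j)ᶜ) ≠ ⊤ :=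
    ne_top_of_le_ne_top hgeomsum (ENNReal.tsum_le_tsum hDgeo)
  have hD0 : ℙ (limsup (fun j => (D j)ᶜ) atTop) = 0 := measure_limsup_atTop_eq_zero hDsum
  -- pointwise inclusion
  have hsub : limsup C atTop ⊆ limsup A atTop ∪ limsup (fun j => (D j)ᶜ) atTop := by
    intro ω hω
    by_cases hN : ω ∈ limsup (fun j => (D j)ᶜ) atTop
    · exact Or.inr hN
    left
    have hfC : ∃ᶠ j in atTop, ω ∈ C j := mem_limsup_iff_frequently_mem.mp hω
    have heD : ∀ᶠ j in atTop, ω ∈ D j := by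
      rw [mem_limsup_iff_frequently_mem, not_frequently] at hN
      refine hN.mono fun j hj => ?_
      simpa [Set.notMem_compl_iff] using hj
    have hfreq : ∃ᶠ j in atTop, ω ∈ A (m (j+1)) := by
      refine (hfC.and_eventually heD).mono ?_
      rintro j ⟨hc, hd⟩
      have hall : ∀ i, i < m (j+1) → ξ i ω < ks (j+1) := by
        intro i hi
        by_cases hcase : i < m j
        · exact Set.mem_iInter₂.mp hd i (Finset.mem_range.mpr hcase)
        · exact Set.mem_iInter₂.mp hc i (Finset.mem_Ico.mpr ⟨not_lt.mp hcase, hi⟩)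
      have hks0 : 0 < ks (j+1) := lt_of_le_of_lt (Nat.zero_le _) (hkslt j)
      have hsup : ((Finset.range (m (j+1))).sup fun i => ξ i ω) < ks (j+1) := by
        refine (Finset.sup_lt_iff hks0).mpr fun i hi => hall i (Finset.mem_range.mp hi)
      have hma : a (m (j+1)) = ks (j+1) := hmaeq (j+1)
      show (((Finset.range (m (j+1))).sup fun i => ξ i ω : ℕ) : ℤ) ≤ (a (m (j+1)) : ℤ) - 1
      rw [hma]
      omega
    rw [mem_limsup_iff_frequently_mem]
    exact freq_transfer' (hmst.tendsto_atTop.comp (tendsto_add_atTop_nat 1)) hfreq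
  have hfinal : (1:ℝ≥0∞) ≤ ℙ (limsup A atTop) := by
    calc (1:ℝ≥0∞) = ℙ (limsup C atTop) := hC1.symm
      _ ≤ ℙ (limsup A atTop ∪ limsup (fun j => (D j)ᶜ) atTop) := measure_mono hsub
      _ ≤ ℙ (limsup A atTop) + ℙ (limsup (fun j => (D j)ᶜ) atTop) := measure_union_le _ _
      _ = ℙ (limsup A atTop) := by rw [hD0, add_zero]
  exact le_antisymm prob_le_one hfinal
end

section
/- With ξ i.i.d. ℕ-valued, positive point masses, r monotone, r(n) → ∞, a_n = max{k : P(ξ ≥ k) ≥ 1/n}, and a fixed integer l > 1: P(ξ̄_n ≤ a_n - l infinitely often) equals 0 if ∑_{k≥1} exp(-exp((l-1) r(k))) < ∞, and equals 1 if this series diverges. -/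
set_option maxHeartbeats 1000000
open MeasureTheory ProbabilityTheory Filter


lemma aux_lintegral_CS {Ω : Type*} [MeasurableSpace Ω] (μ : Measure Ω) (f g : Ω → ENNReal)
    (hf : Measurable f) (hg : Measurable g) :
    (∫⁻ ω, f ω * g ω ∂μ) ^ 2 ≤ (∫⁻ ω, f ω ^ 2 ∂μ) * (∫⁻ ω, g ω ^ 2 ∂μ) := by
  have hpq : Real.HolderConjugate 2 2 := ⟨by norm_num, by norm_num, by norm_num⟩
  have h := ENNReal.lintegral_mul_le_Lp_mul_Lq μ hpq hf.aemeasurable hg.aemeasurable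
  have h2 : ∀ (F : Ω → ENNReal), (fun ω => F ω ^ (2:ℝ)) = fun ω => F ω ^ 2 := by
    intro F; funext ω; rw [← ENNReal.rpow_natCast (F ω) 2]; norm_num
  rw [h2 f, h2 g] at h
  calc (∫⁻ ω, f ω * g ω ∂μ) ^ 2 ≤
      ((∫⁻ ω, f ω ^ 2 ∂μ) ^ (1/(2:ℝ)) * (∫⁻ ω, g ω ^ 2 ∂μ) ^ (1/(2:ℝ))) ^ 2 :=
        pow_le_pow_left' h 2
    _ = (∫⁻ ω, f ω ^ 2 ∂μ) * (∫⁻ ω, g ω ^ 2 ∂μ) := by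
        rw [mul_pow, ← ENNReal.rpow_natCast (_ ^ (1/(2:ℝ))) 2, ← ENNReal.rpow_natCast (_ ^ (1/(2:ℝ))) 2,
          ← ENNReal.rpow_mul, ← ENNReal.rpow_mul]
        norm_num

/-- Chung–Erdős inequality. -/
lemma aux_chung_erdos {Ω : Type*} [MeasurableSpace Ω] (μ : Measure Ω) (D : ℕ → Set Ω)
    (hD : ∀ k, MeasurableSet (D k)) (F : Finset ℕ) :
    (∑ k ∈ F, μ (D k)) ^ 2 ≤ μ (⋃ k ∈ F, D k) * ∑ j ∈ F, ∑ k ∈ F, μ (D j ∩ D k) := by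
  set T : Ω → ENNReal := fun ω => ∑ k ∈ F, (D k).indicator 1 ω with hT
  have hTmeas : Measurable T := by
    apply Finset.measurable_sum
    intro k _; exact (measurable_const.indicator (hD k))
  set U : Set Ω := ⋃ k ∈ F, D k with hU
  have hUmeas : MeasurableSet U := by
    exact MeasurableSet.biUnion F.countable_toSet (fun k _ => hD k)
  have hTU : ∀ ω, T ω = U.indicator 1 ω * T ω := by
    intro ω
    by_cases h : ω ∈ U
    · simp [Set.indicator_of_mem h]
    · have : T ω = 0 := by
        apply Finset.sum_eq_zero
        intro k hk
        have : ω ∉ D k := fun hm => h (Set.mem_biUnion hk hm)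
        simp [Set.indicator_of_notMem this]
      simp [this]
  have hintT : ∫⁻ ω, T ω ∂μ = ∑ k ∈ F, μ (D k) := by
    refine (lintegral_finset_sum F (fun k _ => measurable_const.indicator (hD k))).trans ?_
    exact Finset.sum_congr rfl fun k _ => lintegral_indicator_one (hD k)
  have hintT2 : ∫⁻ ω, T ω ^ 2 ∂μ = ∑ j ∈ F, ∑ k ∈ F, μ (D j ∩ D k) := by
    have : ∀ ω, T ω ^ 2 = ∑ j ∈ F, ∑ k ∈ F, ((D j ∩ D k).indicator 1 ω) := by
      intro ω
      rw [sq, hT, Finset.sum_mul_sum]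
      refine Finset.sum_congr rfl fun j _ => Finset.sum_congr rfl fun k _ => ?_
      rw [Set.inter_indicator_one]; rfl
    simp_rw [this]
    refine (lintegral_finset_sum F (fun j _ => Finset.measurable_sum _
      (fun k _ => measurable_const.indicator ((hD j).inter (hD k))))).trans ?_
    refine Finset.sum_congr rfl fun j _ => ?_
    refine (lintegral_finset_sum F (fun k _ => measurable_const.indicator ((hD j).inter (hD k)))).trans ?_
    exact Finset.sum_congr rfl fun k _ => lintegral_indicator_one ((hD j).inter (hD k))
  have hCS := aux_lintegral_CS μ (U.indicator 1) T (measurable_const.indicator hUmeas) hTmeas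
  have hind2 : ∫⁻ ω, (U.indicator 1 ω : ENNReal) ^ 2 ∂μ = μ U := by
    have : ∀ ω, (U.indicator 1 ω : ENNReal) ^ 2 = U.indicator 1 ω := by
      intro ω; by_cases h : ω ∈ U <;> simp [Set.indicator_of_mem, Set.indicator_of_notMem, h]
    simp_rw [this]
    exact lintegral_indicator_one hUmeas
  calc (∑ k ∈ F, μ (D k)) ^ 2 = (∫⁻ ω, T ω ∂μ) ^ 2 := by rw [hintT]
    _ = (∫⁻ ω, U.indicator 1 ω * T ω ∂μ) ^ 2 := by
        congr 1; exact lintegral_congr fun ω => (hTU ω)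
    _ ≤ (∫⁻ ω, (U.indicator 1 ω) ^ 2 ∂μ) * (∫⁻ ω, T ω ^ 2 ∂μ) := hCS
    _ = μ U * ∑ j ∈ F, ∑ k ∈ F, μ (D j ∩ D k) := by rw [hind2, hintT2]

lemma aux_chung_erdos_real {Ω : Type*} [MeasurableSpace Ω] (μ : Measure Ω)
    [IsProbabilityMeasure μ] (D : ℕ → Set Ω)
    (hD : ∀ k, MeasurableSet (D k)) (F : Finset ℕ) :
    (∑ k ∈ F, (μ (D k)).toReal) ^ 2 ≤
      (μ (⋃ k ∈ F, D k)).toReal * ∑ j ∈ F, ∑ k ∈ F, (μ (D j ∩ D k)).toReal := by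
  have h := aux_chung_erdos μ D hD F
  have hne : (μ (⋃ k ∈ F, D k) * ∑ j ∈ F, ∑ k ∈ F, μ (D j ∩ D k)) ≠ ⊤ := by
    apply ENNReal.mul_ne_top (measure_ne_top _ _)
    refine (ENNReal.sum_lt_top.2 fun j _ => ?_).ne
    exact ENNReal.sum_lt_top.2 fun k _ => (measure_lt_top _ _)
  have := ENNReal.toReal_mono hne h
  rw [ENNReal.toReal_mul, ENNReal.toReal_pow, ENNReal.toReal_sum
    (fun k _ => measure_ne_top _ _)] at this
  convert this using 3
  · rw [ENNReal.toReal_sum (fun j _ => ?_)]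
    · refine Finset.sum_congr rfl fun j _ => ?_
      rw [ENNReal.toReal_sum (fun k _ => measure_ne_top _ _)]
    · refine (ENNReal.sum_lt_top.2 fun k _ => measure_lt_top _ _).ne

lemma aux_exp_neg_le_one_sub {x : ℝ} (h0 : 0 ≤ x) (h2 : x ≤ 1/2) :
    Real.exp (-(x + 2*x^2)) ≤ 1 - x := by
  have h1 : (1 : ℝ) + (x + 2*x^2) ≤ Real.exp (x + 2*x^2) := by
    have := Real.add_one_le_exp (x + 2*x^2); linarith
  have hpos : (0:ℝ) < 1 + (x + 2*x^2) := by nlinarith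
  have key : 1 ≤ (1 - x) * (1 + (x + 2*x^2)) := by nlinarith
  rw [Real.exp_neg]
  rw [inv_le_comm₀ (Real.exp_pos _) (by nlinarith)]
  calc (1-x)⁻¹ ≤ 1 + (x + 2*x^2) := by
        rw [inv_le_comm₀ (by nlinarith) hpos]
        rw [inv_le_iff_one_le_mul₀ hpos]
        nlinarith
    _ ≤ Real.exp (x + 2*x^2) := h1

lemma aux_one_sub_le_exp_neg (x : ℝ) : 1 - x ≤ Real.exp (-x) := by
  have := Real.add_one_le_exp (-x); linarith

/-- Theorem 2(ii): for fixed `l > 1`, `P(ξ̄ₙ ≤ aₙ - l  i.o.)` is 0 or 1 according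
as `∑_{k≥1} exp(-exp((l-1) r(k)))` converges or diverges. -/
theorem max_le_a_sub_l_io_zero_one {Ω : Type*} [MeasureSpace Ω]
    [IsProbabilityMeasure (ℙ : Measure Ω)] (ξ : ℕ → Ω → ℕ)
    (hmeas : ∀ i, Measurable (ξ i))
    (hindep : iIndepFun ξ ℙ)
    (hident : ∀ i, IdentDistrib (ξ i) (ξ 0) ℙ ℙ)
    (hpos : ∀ k : ℕ, 0 < ℙ {ω | ξ 0 ω = k})
    (R r : ℕ → ℝ)
    (hR : ∀ n, R n = -Real.log (ℙ {ω | n ≤ ξ 0 ω}).toReal)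
    (hr : ∀ n : ℕ, 1 ≤ n → r n = R n - R (n - 1))
    (hrmono : Monotone r)
    (hrinf : Tendsto r atTop atTop)
    (a : ℕ → ℕ)
    (ha : ∀ n : ℕ, 1 ≤ n →
      IsGreatest {k : ℕ | 1 / (n : ℝ) ≤ (ℙ {ω | k ≤ ξ 0 ω}).toReal} (a n))
    (l : ℕ) (hl : 1 < l) :
    (Summable (fun k : ℕ => Real.exp (-Real.exp (((l : ℝ) - 1) * r (k + 1)))) →
      ℙ (limsup (fun n =>
          {ω | (((Finset.range n).sup fun i => ξ i ω : ℕ) : ℤ) ≤ (a n : ℤ) - l})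
        atTop) = 0) ∧
    (¬ Summable (fun k : ℕ => Real.exp (-Real.exp (((l : ℝ) - 1) * r (k + 1)))) →
      ℙ (limsup (fun n =>
          {ω | (((Finset.range n).sup fun i => ξ i ω : ℕ) : ℤ) ≤ (a n : ℤ) - l})
        atTop) = 1) := by
  set g : ℕ → ℝ := fun k => (ℙ {ω | k ≤ ξ 0 ω}).toReal with hg
  have hg0 : g 0 = 1 := by
    have : {ω : Ω | 0 ≤ ξ 0 ω} = Set.univ := Set.eq_univ_of_forall fun ω => Nat.zero_le _
    simp [hg, this]
  have hgpos : ∀ k, 0 < g k := by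
    intro k
    apply ENNReal.toReal_pos _ (measure_ne_top _ _)
    exact (lt_of_lt_of_le (hpos k) (measure_mono fun ω (h : ξ 0 ω = k) => h.ge)).ne'
  have hgle1 : ∀ k, g k ≤ 1 := by
    intro k
    simpa using ENNReal.toReal_mono ENNReal.one_ne_top prob_le_one
  have hganti : Antitone g := by
    intro j k hjk
    exact ENNReal.toReal_mono (measure_ne_top _ _)
      (measure_mono fun ω h => le_trans hjk h)
  have hgexp : ∀ k, g k = Real.exp (-R k) := by
    intro k
    rw [hR, neg_neg, Real.exp_log (hgpos k)]
  have hRmono : Monotone R := by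
    intro j k hjk
    rw [hR, hR]
    exact neg_le_neg (Real.log_le_log (hgpos k) (hganti hjk))
  have hR0 : R 0 = 0 := by
    rw [hR 0, show (ℙ {ω : Ω | 0 ≤ ξ 0 ω}).toReal = 1 from hg0]
    simp
  have hRnonneg : ∀ k, 0 ≤ R k := fun k => hR0 ▸ hRmono (Nat.zero_le k)
  have hRsum : ∀ m k, m ≤ k → R k - R m = ∑ j ∈ Finset.Ioc m k, r j := by
    intro m k hmk
    induction k, hmk using Nat.le_induction with
    | base => simp
    | succ k hmk ih =>
      rw [Finset.sum_Ioc_succ_top hmk, ← ih,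
        hr (k+1) (Nat.le_add_left 1 k)]
      simp
  have hRdiff_lb : ∀ m k, m ≤ k → ((k - m : ℕ) : ℝ) * r (m+1) ≤ R k - R m := by
    intro m k hmk
    rw [hRsum m k hmk]
    have : ∀ j ∈ Finset.Ioc m k, r (m+1) ≤ r j := fun j hj =>
      hrmono (Finset.mem_Ioc.1 hj).1
    calc ((k - m : ℕ) : ℝ) * r (m+1) = (Finset.Ioc m k).card • r (m+1) := by
          rw [Nat.card_Ioc]; simp [nsmul_eq_mul]
      _ ≤ ∑ j ∈ Finset.Ioc m k, r j := Finset.card_nsmul_le_sum _ _ _ this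
  have hRdiff_ub : ∀ m k, m ≤ k → R k - R m ≤ ((k - m : ℕ) : ℝ) * r k := by
    intro m k hmk
    rw [hRsum m k hmk]
    have : ∀ j ∈ Finset.Ioc m k, r j ≤ r k := fun j hj =>
      hrmono (Finset.mem_Ioc.1 hj).2
    calc ∑ j ∈ Finset.Ioc m k, r j ≤ (Finset.Ioc m k).card • r k :=
          Finset.sum_le_card_nsmul _ _ _ this
      _ = ((k - m : ℕ) : ℝ) * r k := by rw [Nat.card_Ioc]; simp [nsmul_eq_mul]
  have hgtend : Tendsto g atTop (nhds 0) := by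
    have h1 : Tendsto (fun k => ℙ {ω : Ω | k ≤ ξ 0 ω}) atTop (nhds (ℙ (⋂ k, {ω : Ω | k ≤ ξ 0 ω}))) := by
      apply tendsto_measure_iInter_atTop
      · exact fun k => ((hmeas 0) (trivial : MeasurableSet {x : ℕ | k ≤ x})).nullMeasurableSet
      · exact fun j k hjk ω h => le_trans hjk h
      · exact ⟨0, measure_ne_top _ _⟩
    have h2 : (⋂ k, {ω : Ω | k ≤ ξ 0 ω}) = ∅ := by
      ext ω; simp only [Set.mem_iInter, Set.mem_setOf_eq, Set.mem_empty_iff_false, iff_false]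
      push_neg; exact ⟨ξ 0 ω + 1, by omega⟩
    rw [h2, measure_empty] at h1
    have := (ENNReal.tendsto_toReal (by simp : (0:ENNReal) ≠ ⊤)).comp h1
    simpa [hg, Function.comp_def] using this
  -- a facts
  have haMem : ∀ n : ℕ, 1 ≤ n → 1/(n:ℝ) ≤ g (a n) := fun n hn => (ha n hn).1
  have haGe : ∀ n : ℕ, 1 ≤ n → ∀ k, 1/(n:ℝ) ≤ g k → k ≤ a n := fun n hn k hk => (ha n hn).2 hk
  have hinv_le : ∀ K (n : ℕ), 1 ≤ n → (g K)⁻¹ ≤ (n:ℝ) → 1/(n:ℝ) ≤ g K := by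
    intro K n hn hle
    have hnpos : (0:ℝ) < n := by exact_mod_cast hn
    rw [one_div, inv_le_comm₀ hnpos (hgpos K)]
    exact hle
  have haUnbounded : ∀ K : ℕ, ∃ N, 1 ≤ N ∧ ∀ n, N ≤ n → K ≤ a n := by
    intro K
    refine ⟨max 1 ⌈(g K)⁻¹⌉₊, le_max_left _ _, fun n hn => ?_⟩
    have h1 : 1 ≤ n := le_trans (le_max_left _ _) hn
    apply haGe n h1
    apply hinv_le K n h1
    calc (g K)⁻¹ ≤ (⌈(g K)⁻¹⌉₊ : ℝ) := Nat.le_ceil _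
      _ ≤ (n : ℝ) := by exact_mod_cast le_trans (le_max_right _ _) hn
  have hm_ex : ∀ k : ℕ, ∃ n, 1 ≤ n ∧ k ≤ a n := by
    intro k
    obtain ⟨N, hN1, hN2⟩ := haUnbounded k
    exact ⟨N, hN1, hN2 N le_rfl⟩
  set m : ℕ → ℕ := fun k => Nat.find (hm_ex k) with hm
  have hm1 : ∀ k, 1 ≤ m k := fun k => (Nat.find_spec (hm_ex k)).1
  have hm2 : ∀ k, k ≤ a (m k) := fun k => (Nat.find_spec (hm_ex k)).2
  have hm_min : ∀ k n, 1 ≤ n → k ≤ a n → m k ≤ n := fun k n hn hk =>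
    Nat.find_le ⟨hn, hk⟩
  have hm_mono : Monotone m := fun j k hjk =>
    hm_min j (m k) (hm1 k) (le_trans hjk (hm2 k))
  have hm_lb : ∀ k, (g k)⁻¹ ≤ (m k : ℝ) := by
    intro k
    have h1 : 1/(m k : ℝ) ≤ g (a (m k)) := haMem (m k) (hm1 k)
    have h2 : g (a (m k)) ≤ g k := hganti (hm2 k)
    have hmpos : (0:ℝ) < m k := by exact_mod_cast hm1 k
    rw [inv_le_comm₀ (hgpos k) hmpos]
    rw [one_div] at h1
    exact le_trans h1 h2
  have hm_ub : ∀ k, (m k : ℝ) ≤ (g k)⁻¹ + 1 := by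
    intro k
    have hinv0 : (0:ℝ) ≤ (g k)⁻¹ := le_of_lt (inv_pos.2 (hgpos k))
    have hstep : m k ≤ max 1 ⌈(g k)⁻¹⌉₊ := by
      apply hm_min k _ (le_max_left _ _)
      apply haGe _ (le_max_left _ _)
      apply hinv_le k _ (le_max_left _ _)
      calc (g k)⁻¹ ≤ (⌈(g k)⁻¹⌉₊ : ℝ) := Nat.le_ceil _
        _ ≤ ((max 1 ⌈(g k)⁻¹⌉₊ : ℕ) : ℝ) := by exact_mod_cast le_max_right _ _
    calc (m k : ℝ) ≤ ((max 1 ⌈(g k)⁻¹⌉₊ : ℕ) : ℝ) := by exact_mod_cast hstep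
      _ ≤ (g k)⁻¹ + 1 := by
        rw [Nat.cast_max]
        apply max_le (by linarith)
        linarith [le_of_lt (Nat.ceil_lt_add_one hinv0)]
  -- product formula
  have hprod : ∀ (S : Finset ℕ) (T : ℕ → Set ℕ),
      ℙ (⋂ i ∈ S, ξ i ⁻¹' T i) = ∏ i ∈ S, ℙ (ξ 0 ⁻¹' T i) := by
    intro S T
    rw [hindep.measure_inter_preimage_eq_mul S (fun i _ => trivial)]
    exact Finset.prod_congr rfl fun i _ => (hident i).measure_mem_eq trivial
  -- events D
  set D : ℕ → Set Ω := fun k => ⋂ i ∈ Finset.range (m k), ξ i ⁻¹' {x | x + l ≤ k} with hD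
  have hD_mem : ∀ k ω, ω ∈ D k ↔ ∀ i, i < m k → ξ i ω + l ≤ k := by
    intro k ω
    simp [hD, Set.mem_iInter]
  have hD_meas : ∀ k, MeasurableSet (D k) := by
    intro k
    exact Finset.measurableSet_biInter _ (fun i _ => (hmeas i) trivial)
  set FF : ℕ → ENNReal := fun k => ℙ (ξ 0 ⁻¹' {x | x + l ≤ k}) with hFF
  have hD_measure : ∀ k, ℙ (D k) = FF k ^ (m k) := by
    intro k
    rw [hD]
    rw [hprod (Finset.range (m k)) (fun _ => {x | x + l ≤ k})]
    rw [Finset.prod_const, Finset.card_range]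
  set pf : ℕ → ℝ := fun k => (FF k).toReal with hpf
  have hpf_nonneg : ∀ k, 0 ≤ pf k := fun k => ENNReal.toReal_nonneg
  have hpf_le_one : ∀ k, pf k ≤ 1 := by
    intro k
    simpa [hpf] using ENNReal.toReal_mono ENNReal.one_ne_top (prob_le_one (μ := (ℙ : Measure Ω)))
  have hPD : ∀ k, (ℙ (D k)).toReal = pf k ^ (m k) := by
    intro k
    rw [hD_measure k, ENNReal.toReal_pow]
  have hpf_eq : ∀ k, l ≤ k → pf k = 1 - g (k - l + 1) := by
    intro k hk
    have hcompl : {ω : Ω | k - l + 1 ≤ ξ 0 ω} = (ξ 0 ⁻¹' {x | x + l ≤ k})ᶜ := by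
      ext ω
      simp only [Set.mem_setOf_eq, Set.mem_compl_iff, Set.mem_preimage]
      omega
    have h1 : ℙ ((ξ 0 ⁻¹' {x | x + l ≤ k})ᶜ) = 1 - FF k :=
      prob_compl_eq_one_sub ((hmeas 0) trivial)
    have h2 : g (k - l + 1) = 1 - pf k := by
      rw [hg]
      simp only
      rw [hcompl, h1, ENNReal.toReal_sub_of_le prob_le_one ENNReal.one_ne_top]
      simp only [ENNReal.toReal_one]
      rfl
    linarith
  -- limsup membership
  have hmem : ∀ (u : ℕ → Set Ω) (ω : Ω),
      ω ∈ limsup u atTop ↔ ∀ N, ∃ n, N ≤ n ∧ ω ∈ u n := by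
    intro u ω
    rw [limsup_eq_iInf_iSup_of_nat]
    simp [Set.mem_iInter, Set.mem_iUnion]
  -- events A
  set A : ℕ → Set Ω := fun n =>
    {ω | (((Finset.range n).sup fun i => ξ i ω : ℕ) : ℤ) ≤ (a n : ℤ) - l} with hA
  have hA_iff : ∀ n, 1 ≤ n → ∀ ω, (ω ∈ A n ↔ ∀ i, i < n → ξ i ω + l ≤ a n) := by
    intro n hn ω
    simp only [hA, Set.mem_setOf_eq]
    constructor
    · intro h i hi
      have h1 : (ξ i ω : ℤ) ≤ ((Finset.range n).sup fun j => ξ j ω : ℕ) := by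
        have h2 := Finset.le_sup (f := fun j => ξ j ω) (Finset.mem_range.2 hi)
        exact_mod_cast h2
      omega
    · intro h
      have h0 : l ≤ a n := by
        have := h 0 hn
        omega
      have hsup : ((Finset.range n).sup fun i => ξ i ω) ≤ a n - l := by
        apply Finset.sup_le
        intro i hi
        have := h i (Finset.mem_range.1 hi)
        omega
      have : (((Finset.range n).sup fun i => ξ i ω : ℕ) : ℤ) ≤ ((a n - l : ℕ) : ℤ) :=
        Int.ofNat_le.2 hsup
      omega
  clear_value g m D FF pf A
  -- CONVERGENCE PART
  have convPart : Summable (fun k : ℕ => Real.exp (-Real.exp (((l : ℝ) - 1) * r (k + 1)))) →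
      ℙ (limsup A atTop) = 0 := by
    intro hsum
    set B : ℕ → ℝ := fun k => Real.exp (-Real.exp (((l:ℝ) - 1) * r (k - l + 2))) with hB
    have hB_pos : ∀ k, 0 < B k := fun k => Real.exp_pos _
    have hB_summable : Summable B := by
      rw [← summable_nat_add_iff l]
      have : (fun k => B (k + l)) = fun k => Real.exp (-Real.exp (((l:ℝ) - 1) * r ((k+1) + 1))) := by
        funext k
        have : k + l - l + 2 = (k + 1) + 1 := by omega
        rw [hB]; simp only [this]
      rw [this]
      exact (summable_nat_add_iff 1).2 hsum
    have hPD_le : ∀ k, (ℙ (D k)).toReal ≤ B k := by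
      intro k
      by_cases hk : l ≤ k
      · rw [hPD k, hpf_eq k hk]
        set x := g (k - l + 1) with hx
        have hx0 : 0 < x := hgpos _
        have hx1 : x ≤ 1 := hgle1 _
        calc (1 - x) ^ (m k) ≤ Real.exp (-x) ^ (m k) := by
              apply pow_le_pow_left₀ (by linarith) (aux_one_sub_le_exp_neg x)
          _ = Real.exp (-((m k : ℝ) * x)) := by
              rw [← Real.exp_nat_mul]; congr 1; ring
          _ ≤ Real.exp (-((g k)⁻¹ * x)) := by
              apply Real.exp_le_exp.2
              have := hm_lb k
              nlinarith
          _ ≤ B k := by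
              rw [hB]
              apply Real.exp_le_exp.2
              simp only [neg_le_neg_iff]
              have hgk : (g k)⁻¹ = Real.exp (R k) := by
                rw [hgexp k, ← Real.exp_neg, neg_neg]
              have hgx : x = Real.exp (-(R (k - l + 1))) := hgexp _
              rw [hgk, hgx, ← Real.exp_add]
              apply Real.exp_le_exp.2
              have hle : k - l + 1 ≤ k := by omega
              have := hRdiff_lb (k - l + 1) k hle
              have hcard : ((k - (k - l + 1) : ℕ) : ℝ) = (l : ℝ) - 1 := by
                have : (k - (k - l + 1) : ℕ) = l - 1 := by omega
                rw [this]
                have : (1:ℕ) ≤ l := le_of_lt hl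
                push_cast [Nat.cast_sub this]
                ring
              have harg : (k - l + 1) + 1 = k - l + 2 := by omega
              rw [hcard, harg] at this
              linarith
      · have hDk : D k = ∅ := by
          ext ω
          rw [hD_mem k ω]
          simp only [Set.mem_empty_iff_false, iff_false]
          push_neg
          exact ⟨0, hm1 k, by omega⟩
        rw [hDk]
        simp only [measure_empty, ENNReal.toReal_zero]
        exact le_of_lt (hB_pos k)
    have hPD_toReal_summable : Summable (fun k => (ℙ (D k)).toReal) :=
      Summable.of_nonneg_of_le (fun k => ENNReal.toReal_nonneg) hPD_le hB_summable
    have htsum_ne_top : ∑' k, ℙ (D k) ≠ ⊤ := by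
      have heq : ∀ k, ℙ (D k) = ENNReal.ofReal ((ℙ (D k)).toReal) := fun k =>
        (ENNReal.ofReal_toReal (measure_ne_top _ _)).symm
      calc ∑' k, ℙ (D k) = ∑' k, ENNReal.ofReal ((ℙ (D k)).toReal) := by
            exact tsum_congr heq
        _ = ENNReal.ofReal (∑' k, (ℙ (D k)).toReal) :=
            (ENNReal.ofReal_tsum_of_nonneg (fun k => ENNReal.toReal_nonneg)
              hPD_toReal_summable).symm
        _ ≠ ⊤ := ENNReal.ofReal_ne_top
    have hlimD : ℙ (limsup D atTop) = 0 := measure_limsup_atTop_eq_zero htsum_ne_top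
    have hAD : limsup A atTop ⊆ limsup D atTop := by
      intro ω hω
      rw [hmem] at hω ⊢
      intro K
      obtain ⟨N, hN1, hN2⟩ := haUnbounded (max K l)
      obtain ⟨n, hn_ge, hωA⟩ := hω N
      have hn1 : 1 ≤ n := le_trans hN1 hn_ge
      have hak : max K l ≤ a n := hN2 n hn_ge
      refine ⟨a n, le_trans (le_max_left _ _) hak, ?_⟩
      rw [hD_mem]
      intro i hi
      have hmn : m (a n) ≤ n := hm_min (a n) n hn1 le_rfl
      exact (hA_iff n hn1 ω).1 hωA i (lt_of_lt_of_le hi hmn)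
    have : ℙ (limsup A atTop) ≤ 0 := hlimD ▸ measure_mono hAD
    exact le_antisymm this zero_le
  -- ZERO-ONE LAW
  have hzeroone : ℙ (limsup A atTop) = 0 ∨ ℙ (limsup A atTop) = 1 := by
    have htail : MeasurableSet[limsup (fun i => MeasurableSpace.comap (ξ i) inferInstance) atTop]
        (limsup A atTop) := by
      rw [limsup_eq_iInf_iSup_of_nat, MeasurableSpace.measurableSet_iInf]
      intro N
      have hrep : limsup A atTop = ⋂ M, ⋃ n, ⋃ (_ : M ≤ n),
          ⋂ i ∈ Finset.Ico N n, ξ i ⁻¹' {x : ℕ | (x:ℤ) ≤ (a n : ℤ) - l} := by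
        ext ω
        rw [hmem]
        simp only [Set.mem_iInter, Set.mem_iUnion, Set.mem_preimage, Set.mem_setOf_eq,
          Finset.mem_Ico]
        constructor
        · intro hω M
          obtain ⟨n, hn, hωA⟩ := hω (max M 1)
          have hn1 : 1 ≤ n := le_trans (le_max_right _ _) hn
          refine ⟨n, le_trans (le_max_left _ _) hn, fun i hi => ?_⟩
          have := (hA_iff n hn1 ω).1 hωA i hi.2
          omega
        · intro hω M
          set c := (Finset.range N).sup (fun i => ξ i ω) with hc
          obtain ⟨N₂, hN₂1, hN₂2⟩ := haUnbounded (c + l)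
          obtain ⟨n, hn, hωA⟩ := hω (max (max M N₂) 1)
          have hn1 : 1 ≤ n := le_trans (le_max_right _ _) hn
          have hnM : M ≤ n := le_trans (le_trans (le_max_left _ _) (le_max_left _ _)) hn
          have hnN₂ : N₂ ≤ n := le_trans (le_trans (le_max_right _ _) (le_max_left _ _)) hn
          refine ⟨n, hnM, (hA_iff n hn1 ω).2 fun i hi => ?_⟩
          by_cases hiN : i < N
          · have h1 : ξ i ω ≤ c := Finset.le_sup (f := fun j => ξ j ω) (Finset.mem_range.2 hiN)
            have h2 : c + l ≤ a n := hN₂2 n hnN₂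
            omega
          · push_neg at hiN
            have := hωA i ⟨hiN, hi⟩
            omega
      rw [hrep]
      refine MeasurableSet.iInter fun M => MeasurableSet.iUnion fun n =>
        MeasurableSet.iUnion fun _ => MeasurableSet.biInter (Finset.Ico N n).countable_toSet
          fun i hi => ?_
      have hiN : N ≤ i := (Finset.mem_Ico.1 hi).1
      have hbase : MeasurableSet[MeasurableSpace.comap (ξ i) inferInstance]
          (ξ i ⁻¹' {x : ℕ | (x:ℤ) ≤ (a n : ℤ) - l}) := ⟨_, trivial, rfl⟩
      exact le_iSup₂ (f := fun j (_ : j ≥ N) =>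
        MeasurableSpace.comap (ξ j) inferInstance) i hiN _ hbase
    exact measure_zero_or_one_of_measurableSet_limsup_atTop
      (fun i => (hmeas i).comap_le) hindep htail
  -- DIVERGENCE PART: setup
  classical
  set X : ℕ → ℝ := fun k => Real.exp (((l:ℝ) - 1) * r k) with hX
  have hX_pos : ∀ k, 0 < X k := fun k => Real.exp_pos _
  obtain ⟨K₀, hK₀⟩ : ∃ K₀ : ℕ, ∀ j, K₀ ≤ j → 1 ≤ r j :=
    eventually_atTop.1 (hrinf.eventually_ge_atTop 1)
  have hRlin : ∀ n : ℕ, (n:ℝ) - K₀ ≤ R n := by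
    intro n
    by_cases hn : K₀ ≤ n
    · have h1 := hRdiff_lb K₀ n hn
      have h2 : (1:ℝ) ≤ r (K₀ + 1) := hK₀ _ (Nat.le_succ _)
      have h3 : ((n - K₀ : ℕ) : ℝ) = (n:ℝ) - K₀ := by
        push_cast [Nat.cast_sub hn]; ring
      nlinarith [hRnonneg K₀, Nat.cast_nonneg (α := ℝ) (n - K₀)]
    · push_neg at hn
      have : (n:ℝ) < K₀ := by exact_mod_cast hn
      linarith [hRnonneg n]
  have hxk : ∀ k, l ≤ k →
      g (k - l + 1) ≤ Real.exp ((K₀:ℝ) + l - 1) * Real.exp (-(k:ℝ)) := by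
    intro k hk
    rw [hgexp (k - l + 1), ← Real.exp_add]
    apply Real.exp_le_exp.2
    have h1 := hRlin (k - l + 1)
    have h2 : ((k - l + 1 : ℕ) : ℝ) = (k:ℝ) - l + 1 := by
      push_cast [Nat.cast_sub hk]; ring
    rw [h2] at h1
    linarith
  -- threshold K₂ for the smallness of the correction term
  obtain ⟨K₂, hK₂⟩ : ∃ K₂ : ℕ, ∀ k, K₂ ≤ k →
      (4*(k:ℝ)+2) * Real.exp ((K₀:ℝ) + l - 1) * Real.exp (-(k:ℝ)) < 1 := by
    have T1 := Real.tendsto_pow_mul_exp_neg_atTop_nhds_zero 1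
    have T0 := Real.tendsto_pow_mul_exp_neg_atTop_nhds_zero 0
    have hcomb : Tendsto (fun x : ℝ =>
        (4*x+2) * Real.exp ((K₀:ℝ) + l - 1) * Real.exp (-x)) atTop (nhds 0) := by
      have := ((T1.const_mul (4 * Real.exp ((K₀:ℝ) + l - 1))).add
        (T0.const_mul (2 * Real.exp ((K₀:ℝ) + l - 1))))
      simp only [mul_zero, add_zero] at this
      refine this.congr fun x => ?_
      simp only [pow_one, pow_zero, one_mul]
      ring
    have hcompn := hcomb.comp tendsto_natCast_atTop_atTop (α := ℕ)
    exact eventually_atTop.1 (hcompn.eventually (Iio_mem_nhds zero_lt_one))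
  -- threshold J for g ≤ 1/2
  obtain ⟨J, hJ⟩ : ∃ J : ℕ, ∀ j, J ≤ j → g j < 1/2 :=
    eventually_atTop.1 (hgtend.eventually (Iio_mem_nhds (by norm_num : (0:ℝ) < 1/2)))
  set N₀ : ℕ := max (max (l + J) K₂) (l + 1) with hN₀
  have hN₀l : l + 1 ≤ N₀ := le_max_right _ _
  -- X k ≤ 2k for good k
  have hXk_le : ∀ k : ℕ, 1 ≤ k → ((k:ℝ)^2)⁻¹ ≤ Real.exp (-X k) → X k ≤ 2*(k:ℝ) := by
    intro k hk hgood
    have hkpos : (0:ℝ) < k := by exact_mod_cast hk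
    have h1 : Real.exp (X k) ≤ (k:ℝ)^2 := by
      rw [Real.exp_neg] at hgood
      have h2 : (0:ℝ) < Real.exp (X k) := Real.exp_pos _
      rw [inv_le_inv₀ (by positivity) h2] at hgood
      exact hgood
    have h3 : X k ≤ Real.log ((k:ℝ)^2) := by
      have := Real.log_le_log (Real.exp_pos _) h1
      rwa [Real.log_exp] at this
    have h4 : Real.log ((k:ℝ)^2) = 2 * Real.log k := by
      rw [Real.log_pow]; push_cast; ring
    have h5 : Real.log k ≤ k := Real.log_le_sub_one_of_pos hkpos |>.trans (by linarith)
    linarith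
  -- correction smallness for good k beyond N₀
  have hcorr : ∀ k, N₀ ≤ k → ((k:ℝ)^2)⁻¹ ≤ Real.exp (-X k) →
      2 * (X k + 1) * g (k - l + 1) ≤ 1 := by
    intro k hk hgood
    have hkl : l ≤ k := by omega
    have hk1 : 1 ≤ k := by omega
    have hx := hxk k hkl
    have hX2k := hXk_le k hk1 hgood
    have hK2k : K₂ ≤ k := le_trans (le_trans (le_max_right _ _) (le_max_left _ _)) hk
    have hW := hK₂ k hK2k
    have hg0' : 0 ≤ g (k - l + 1) := le_of_lt (hgpos _)
    have hXpos := hX_pos k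
    have h1 : 2 * (X k + 1) * g (k - l + 1) ≤ (4*(k:ℝ)+2) * g (k - l + 1) := by
      nlinarith
    have h2 : (4*(k:ℝ)+2) * g (k - l + 1) ≤
        (4*(k:ℝ)+2) * (Real.exp ((K₀:ℝ) + l - 1) * Real.exp (-(k:ℝ))) := by
      have hkR : (0:ℝ) ≤ 4*(k:ℝ)+2 := by positivity
      exact mul_le_mul_of_nonneg_left hx hkR
    nlinarith [hW]
  -- x ≤ 1/2 for k ≥ N₀
  have hxhalf : ∀ k, N₀ ≤ k → g (k - l + 1) ≤ 1/2 := by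
    intro k hk
    have : J ≤ k - l + 1 := by
      have : l + J ≤ N₀ := le_trans (le_max_left _ _) (le_max_left _ _)
      omega
    exact le_of_lt (hJ _ this)
  -- m k * x ≤ X k + 1
  have hmx : ∀ k, l ≤ k → (m k : ℝ) * g (k - l + 1) ≤ X k + 1 := by
    intro k hk
    have hx0 : 0 ≤ g (k - l + 1) := le_of_lt (hgpos _)
    have hx1 : g (k - l + 1) ≤ 1 := hgle1 _
    have h1 : (m k : ℝ) * g (k - l + 1) ≤ ((g k)⁻¹ + 1) * g (k - l + 1) :=
      mul_le_mul_of_nonneg_right (hm_ub k) hx0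
    have h2 : (g k)⁻¹ * g (k - l + 1) ≤ X k := by
      have hgk : (g k)⁻¹ = Real.exp (R k) := by
        rw [hgexp k, ← Real.exp_neg, neg_neg]
      rw [hgk, hgexp (k - l + 1), ← Real.exp_add, hX]
      apply Real.exp_le_exp.2
      have hle : k - l + 1 ≤ k := by omega
      have := hRdiff_ub (k - l + 1) k hle
      have hcard : ((k - (k - l + 1) : ℕ) : ℝ) = (l : ℝ) - 1 := by
        have h3 : (k - (k - l + 1) : ℕ) = l - 1 := by omega
        rw [h3]
        have h4 : (1:ℕ) ≤ l := le_of_lt hl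
        push_cast [Nat.cast_sub h4]
        ring
      rw [hcard] at this
      linarith
    nlinarith
  -- lower bound for P(D k) on good k
  have hPklb : ∀ k, N₀ ≤ k → ((k:ℝ)^2)⁻¹ ≤ Real.exp (-X k) →
      Real.exp (-2) * Real.exp (-X k) ≤ pf k ^ m k := by
    intro k hk hgood
    have hkl : l ≤ k := by omega
    set x := g (k - l + 1) with hxdef
    have hx0 : 0 ≤ x := le_of_lt (hgpos _)
    have hxh := hxhalf k hk
    have h1 : Real.exp (-(x + 2*x^2)) ≤ pf k := by
      rw [hpf_eq k hkl]
      exact aux_exp_neg_le_one_sub hx0 hxh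
    have h2 : Real.exp (-(x + 2*x^2)) ^ m k ≤ pf k ^ m k :=
      pow_le_pow_left₀ (le_of_lt (Real.exp_pos _)) h1 _
    have h3 : Real.exp (-(x + 2*x^2)) ^ m k
        = Real.exp (-((m k : ℝ) * (x + 2*x^2))) := by
      rw [← Real.exp_nat_mul]; congr 1; ring
    have h4 : (m k : ℝ) * (x + 2*x^2) ≤ X k + 2 := by
      have hmx' := hmx k hkl
      have hc := hcorr k hk hgood
      have h5 : (m k : ℝ) * (2*x^2) = 2 * ((m k : ℝ) * x) * x := by ring
      have h6 : 2 * ((m k : ℝ) * x) * x ≤ 2 * (X k + 1) * x := by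
        have : (0:ℝ) ≤ x := hx0
        nlinarith [Nat.cast_nonneg (α := ℝ) (m k)]
      nlinarith
    calc Real.exp (-2) * Real.exp (-X k) = Real.exp (-(X k + 2)) := by
          rw [← Real.exp_add]; congr 1; ring
      _ ≤ Real.exp (-((m k : ℝ) * (x + 2*x^2))) := by
          apply Real.exp_le_exp.2; linarith
      _ = Real.exp (-(x + 2*x^2)) ^ m k := h3.symm
      _ ≤ pf k ^ m k := h2
  -- pair bound for distant indices
  have hpair : ∀ j k, N₀ ≤ j → j + l ≤ k →
      (ℙ (D j ∩ D k)).toReal ≤ Real.exp 4 * ((ℙ (D j)).toReal * (ℙ (D k)).toReal) := by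
    intro j k hjN hjlk
    have hjk : j ≤ k := by omega
    have hkN : N₀ ≤ k := by omega
    have hkl : l ≤ k := by omega
    have hmjk : m j ≤ m k := hm_mono hjk
    -- splitting the intersection measure
    have hsplit : ℙ (D j ∩ D k) = FF j ^ m j * FF k ^ (m k - m j) := by
      have hseteq : D j ∩ D k = ⋂ i ∈ Finset.range (m k),
          ξ i ⁻¹' (if i < m j then {x | x + l ≤ j} else {x | x + l ≤ k}) := by
        ext ω
        simp only [Set.mem_inter_iff, hD_mem, Set.mem_iInter, Set.mem_preimage,
          Finset.mem_range]
        constructor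
        · rintro ⟨h1, h2⟩ i hi
          by_cases him : i < m j
          · simpa [him] using h1 i him
          · simpa [him] using h2 i hi
        · intro h
          constructor
          · intro i hi
            have := h i (lt_of_lt_of_le hi hmjk)
            simpa [hi] using this
          · intro i hi
            by_cases him : i < m j
            · have := h i hi
              simp only [him, if_true] at this
              simp only [Set.mem_setOf_eq] at this
              omega
            · have := h i hi
              simpa [him] using this
      rw [hseteq, hprod]
      have hcongr : ∀ i ∈ Finset.range (m k),
          ℙ (ξ 0 ⁻¹' (if i < m j then {x | x + l ≤ j} else {x | x + l ≤ k}))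
          = if i < m j then FF j else FF k := by
        intro i _
        by_cases him : i < m j <;> simp [him, hFF]
      rw [Finset.prod_congr rfl hcongr, Finset.prod_ite]
      have hf1 : (Finset.range (m k)).filter (fun i => i < m j) = Finset.range (m j) := by
        ext i; simp only [Finset.mem_filter, Finset.mem_range]; omega
      have hf2 : (Finset.range (m k)).filter (fun i => ¬ i < m j) = Finset.Ico (m j) (m k) := by
        ext i; simp only [Finset.mem_filter, Finset.mem_range, Finset.mem_Ico]; omega
      rw [hf1, hf2, Finset.prod_const, Finset.prod_const, Finset.card_range, Nat.card_Ico]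
    -- real version
    have hq : (ℙ (D j ∩ D k)).toReal = pf j ^ m j * pf k ^ (m k - m j) := by
      rw [hsplit, ENNReal.toReal_mul, ENNReal.toReal_pow, ENNReal.toReal_pow, hpf]
    -- key: exp(-4) ≤ pf k ^ m j
    have hkey : Real.exp (-4) ≤ pf k ^ m j := by
      set x := g (k - l + 1) with hxdef
      have hx0 : 0 ≤ x := le_of_lt (hgpos _)
      have hxh := hxhalf k hkN
      have h1 : Real.exp (-(2*x)) ≤ pf k := by
        rw [hpf_eq k hkl]
        calc Real.exp (-(2*x)) ≤ Real.exp (-(x + 2*x^2)) := by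
              apply Real.exp_le_exp.2; nlinarith
          _ ≤ 1 - x := aux_exp_neg_le_one_sub hx0 hxh
      have h2 : Real.exp (-(2*x)) ^ m j ≤ pf k ^ m j :=
        pow_le_pow_left₀ (le_of_lt (Real.exp_pos _)) h1 _
      have h3 : Real.exp (-(2*x)) ^ m j = Real.exp (-(2 * ((m j : ℝ) * x))) := by
        rw [← Real.exp_nat_mul]; congr 1; ring
      have h4 : (m j : ℝ) * x ≤ 2 := by
        have hub := hm_ub j
        have hgj : (g j)⁻¹ = Real.exp (R j) := by
          rw [hgexp j, ← Real.exp_neg, neg_neg]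
        have hRj : R j ≤ R (k - l + 1) := hRmono (by omega)
        have hx_eq : x = Real.exp (-(R (k - l + 1))) := hgexp _
        have h5 : (g j)⁻¹ * x = Real.exp (R j - R (k - l + 1)) := by
          rw [hgj, hx_eq, ← Real.exp_add]; congr 1
        have h6 : Real.exp (R j - R (k - l + 1)) ≤ 1 := by
          rw [← Real.exp_zero]
          apply Real.exp_le_exp.2; linarith
        have hx1 : x ≤ 1 := hgle1 _
        nlinarith [mul_le_mul_of_nonneg_right hub hx0]
      calc Real.exp (-4) ≤ Real.exp (-(2 * ((m j : ℝ) * x))) := by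
            apply Real.exp_le_exp.2; linarith
        _ = Real.exp (-(2*x)) ^ m j := h3.symm
        _ ≤ pf k ^ m j := h2
    -- combine
    rw [hq, hPD j, hPD k]
    have hpow : pf k ^ m k = pf k ^ (m k - m j) * pf k ^ m j := by
      rw [← pow_add]
      congr 1
      omega
    rw [hpow]
    have hu : (0:ℝ) ≤ pf j ^ m j := pow_nonneg (hpf_nonneg j) _
    have hv : (0:ℝ) ≤ pf k ^ (m k - m j) := pow_nonneg (hpf_nonneg k) _
    have hexp4 : Real.exp 4 * Real.exp (-4) = 1 := by
      rw [← Real.exp_add]; norm_num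
    nlinarith [mul_nonneg hu hv, Real.exp_pos (4:ℝ),
      mul_le_mul_of_nonneg_left hkey (mul_nonneg hu hv)]
  -- V sets
  have hVmeas : ∀ N : ℕ, MeasurableSet (⋃ n, ⋃ (_ : N ≤ n), D n) :=
    fun N => MeasurableSet.iUnion fun n => MeasurableSet.iUnion fun _ => hD_meas n
  have hVanti : Antitone (fun N : ℕ => ⋃ n, ⋃ (_ : N ≤ n), D n) := by
    intro N N' hNN' ω hω
    simp only [Set.mem_iUnion] at hω ⊢
    obtain ⟨n, hn, hωn⟩ := hω
    exact ⟨n, le_trans hNN' hn, hωn⟩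
  -- inclusion limsup D ⊆ limsup A
  have hDA : limsup D atTop ⊆ limsup A atTop := by
    intro ω hω
    rw [hmem] at hω ⊢
    intro N
    have hpos' : (0:ℝ) < 1/((N:ℝ)+1) := by positivity
    obtain ⟨K, hK⟩ : ∃ K : ℕ, ∀ k, K ≤ k → g k < 1/((N:ℝ)+1) :=
      eventually_atTop.1 (hgtend.eventually (Iio_mem_nhds hpos'))
    obtain ⟨k, hk_ge, hωD⟩ := hω K
    have hmk : N + 1 ≤ m k := by
      have h1 : g k < 1/((N:ℝ)+1) := hK k hk_ge
      have h2 : ((N:ℝ)+1) ≤ (g k)⁻¹ := by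
        rw [le_inv_comm₀ (by positivity) (hgpos k)]
        rw [one_div] at h1
        exact le_of_lt h1
      have h3 : ((N:ℝ)+1) ≤ (m k : ℝ) := le_trans h2 (hm_lb k)
      exact_mod_cast h3
    refine ⟨m k, by omega, ?_⟩
    rw [hA_iff (m k) (hm1 k)]
    intro i hi
    have h4 := (hD_mem k ω).1 hωD i hi
    have h5 := hm2 k
    omega
  -- DIVERGENCE PART
  have divPart : ¬ (Summable (fun k : ℕ => Real.exp (-Real.exp (((l : ℝ) - 1) * r (k + 1))))) →
      ℙ (limsup A atTop) = 1 := by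
    intro hns
    have hnsX : ¬ Summable (fun k => Real.exp (-X k)) := by
      intro hs
      apply hns
      have h1 := (summable_nat_add_iff 1).2 hs
      refine h1.congr fun k => ?_
      rw [hX]
    set t : ℕ → ℝ := fun k => if ((k:ℝ)^2)⁻¹ ≤ Real.exp (-X k) then Real.exp (-X k) else 0
      with ht
    have ht_nonneg : ∀ k, 0 ≤ t k := by
      intro k; rw [ht]; dsimp only; split_ifs <;> positivity
    have ht_not : ¬ Summable t := by
      intro hsum_t
      apply hnsX
      have hsq : Summable (fun k : ℕ => ((k:ℝ)^2)⁻¹) := by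
        have h2 := Real.summable_one_div_nat_pow.2 (one_lt_two)
        refine h2.congr fun k => ?_
        rw [one_div]
      refine Summable.of_nonneg_of_le (fun k => le_of_lt (Real.exp_pos _)) ?_ (hsum_t.add hsq)
      intro k
      rw [ht]; dsimp only
      split_ifs with h
      · have : (0:ℝ) ≤ ((k:ℝ)^2)⁻¹ := by positivity
        linarith
      · push_neg at h
        have h1 : (0:ℝ) ≤ t k := ht_nonneg k
        linarith [le_of_lt h]
    have htsum : Tendsto (fun n => ∑ i ∈ Finset.range n, t i) atTop atTop :=
      (not_summable_iff_tendsto_nat_atTop_of_nonneg ht_nonneg).1 ht_not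
    -- lower bound for tail unions
    have hVlb : ∀ N, N₀ ≤ N →
        ENNReal.ofReal ((Real.exp 4 + 1)⁻¹) ≤ ℙ (⋃ n, ⋃ (_ : N ≤ n), D n) := by
      intro N hN
      have htail : Tendsto (fun n => ∑ i ∈ Finset.Ico N n, t i) atTop atTop := by
        have h1 : Tendsto (fun n => (∑ i ∈ Finset.range n, t i)
            - ∑ i ∈ Finset.range N, t i) atTop atTop :=
          tendsto_atTop_add_const_right atTop _ htsum
        refine h1.congr' ?_
        filter_upwards [eventually_ge_atTop N] with n hn
        rw [Finset.sum_Ico_eq_sub _ hn]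
      obtain ⟨n, hn_ge, hn_big⟩ : ∃ n, N ≤ n ∧
          Real.exp 2 * (2*(l:ℝ)+1) ≤ ∑ i ∈ Finset.Ico N n, t i := by
        obtain ⟨n, hn⟩ := ((htail.eventually_ge_atTop (Real.exp 2 * (2*(l:ℝ)+1))).and
          (eventually_ge_atTop N)).exists
        exact ⟨n, hn.2, hn.1⟩
      set F := (Finset.Ico N n).filter (fun k : ℕ => ((k:ℝ)^2)⁻¹ ≤ Real.exp (-X k)) with hF
      set S := ∑ k ∈ F, (ℙ (D k)).toReal with hS
      have hS_lb : 2*(l:ℝ)+1 ≤ S := by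
        have h1 : ∑ i ∈ Finset.Ico N n, t i = ∑ k ∈ F, Real.exp (-X k) := by
          rw [hF, Finset.sum_filter]
        have h2 : ∀ k ∈ F, Real.exp (-2) * Real.exp (-X k) ≤ (ℙ (D k)).toReal := by
          intro k hk
          rw [hF, Finset.mem_filter, Finset.mem_Ico] at hk
          rw [hPD]
          exact hPklb k (le_trans hN hk.1.1) hk.2
        calc 2*(l:ℝ)+1 = Real.exp (-2) * (Real.exp 2 * (2*(l:ℝ)+1)) := by
              rw [← mul_assoc, ← Real.exp_add]; norm_num
          _ ≤ Real.exp (-2) * ∑ i ∈ Finset.Ico N n, t i :=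
              mul_le_mul_of_nonneg_left hn_big (le_of_lt (Real.exp_pos _))
          _ = ∑ k ∈ F, Real.exp (-2) * Real.exp (-X k) := by rw [h1, Finset.mul_sum]
          _ ≤ S := Finset.sum_le_sum h2
      have hS_pos : 0 < S := by
        have h0 : (0:ℝ) ≤ (l:ℝ) := Nat.cast_nonneg l
        linarith
      have hce := aux_chung_erdos_real ℙ D hD_meas F
      have hdouble : ∑ j ∈ F, ∑ k ∈ F, (ℙ (D j ∩ D k)).toReal
          ≤ Real.exp 4 * S^2 + 2*(l:ℝ)*S := by
        have hinner : ∀ j ∈ F, ∑ k ∈ F, (ℙ (D j ∩ D k)).toReal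
            ≤ Real.exp 4 * (ℙ (D j)).toReal * S + 2*(l:ℝ)*(ℙ (D j)).toReal := by
          intro j hj
          have hjN : N₀ ≤ j := by
            rw [hF, Finset.mem_filter, Finset.mem_Ico] at hj
            exact le_trans hN hj.1.1
          rw [← Finset.sum_filter_add_sum_filter_not F (fun k => j + l ≤ k ∨ k + l ≤ j)]
          have hfar : ∑ k ∈ F.filter (fun k => j + l ≤ k ∨ k + l ≤ j),
              (ℙ (D j ∩ D k)).toReal ≤ Real.exp 4 * (ℙ (D j)).toReal * S := by
            have hterm : ∀ k ∈ F.filter (fun k => j + l ≤ k ∨ k + l ≤ j),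
                (ℙ (D j ∩ D k)).toReal
                ≤ Real.exp 4 * ((ℙ (D j)).toReal * (ℙ (D k)).toReal) := by
              intro k hk
              rw [Finset.mem_filter] at hk
              have hkN : N₀ ≤ k := by
                have h3 := hk.1
                rw [hF, Finset.mem_filter, Finset.mem_Ico] at h3
                exact le_trans hN h3.1.1
              rcases hk.2 with h | h
              · exact hpair j k hjN h
              · rw [Set.inter_comm]
                calc (ℙ (D k ∩ D j)).toReal
                    ≤ Real.exp 4 * ((ℙ (D k)).toReal * (ℙ (D j)).toReal) := hpair k j hkN h
                  _ = Real.exp 4 * ((ℙ (D j)).toReal * (ℙ (D k)).toReal) := by ring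
            calc ∑ k ∈ F.filter (fun k => j + l ≤ k ∨ k + l ≤ j), (ℙ (D j ∩ D k)).toReal
                ≤ ∑ k ∈ F.filter (fun k => j + l ≤ k ∨ k + l ≤ j),
                    Real.exp 4 * ((ℙ (D j)).toReal * (ℙ (D k)).toReal) :=
                  Finset.sum_le_sum hterm
              _ ≤ ∑ k ∈ F, Real.exp 4 * ((ℙ (D j)).toReal * (ℙ (D k)).toReal) := by
                  refine Finset.sum_le_sum_of_subset_of_nonneg
                    (Finset.filter_subset _ _) fun k _ _ => ?_
                  positivity
              _ = Real.exp 4 * (ℙ (D j)).toReal * S := by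
                  rw [hS, Finset.mul_sum]
                  exact Finset.sum_congr rfl fun k _ => by ring
          have hnear : ∑ k ∈ F.filter (fun k => ¬ (j + l ≤ k ∨ k + l ≤ j)),
              (ℙ (D j ∩ D k)).toReal ≤ 2*(l:ℝ)*(ℙ (D j)).toReal := by
            have hterm : ∀ k ∈ F.filter (fun k => ¬ (j + l ≤ k ∨ k + l ≤ j)),
                (ℙ (D j ∩ D k)).toReal ≤ (ℙ (D j)).toReal := fun k _ =>
              ENNReal.toReal_mono (measure_ne_top _ _)
                (measure_mono Set.inter_subset_left)
            have hcard : (F.filter (fun k => ¬ (j + l ≤ k ∨ k + l ≤ j))).card ≤ 2*l := by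
              have hsub : F.filter (fun k => ¬ (j + l ≤ k ∨ k + l ≤ j))
                  ⊆ Finset.Ico (j + 1 - l) (j + l) := by
                intro k hk
                rw [Finset.mem_filter] at hk
                have := hk.2
                push_neg at this
                rw [Finset.mem_Ico]
                omega
              calc (F.filter (fun k => ¬ (j + l ≤ k ∨ k + l ≤ j))).card
                  ≤ (Finset.Ico (j + 1 - l) (j + l)).card := Finset.card_le_card hsub
                _ = (j + l) - (j + 1 - l) := Nat.card_Ico _ _
                _ ≤ 2*l := by omega
            calc ∑ k ∈ F.filter (fun k => ¬ (j + l ≤ k ∨ k + l ≤ j)), (ℙ (D j ∩ D k)).toReal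
                ≤ (F.filter (fun k => ¬ (j + l ≤ k ∨ k + l ≤ j))).card • (ℙ (D j)).toReal :=
                  Finset.sum_le_card_nsmul _ _ _ hterm
              _ = ((F.filter (fun k => ¬ (j + l ≤ k ∨ k + l ≤ j))).card : ℝ)
                  * (ℙ (D j)).toReal := nsmul_eq_mul _ _
              _ ≤ 2*(l:ℝ)*(ℙ (D j)).toReal := by
                  refine mul_le_mul_of_nonneg_right ?_ ENNReal.toReal_nonneg
                  exact_mod_cast hcard
          linarith
        calc ∑ j ∈ F, ∑ k ∈ F, (ℙ (D j ∩ D k)).toReal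
            ≤ ∑ j ∈ F, (Real.exp 4 * (ℙ (D j)).toReal * S + 2*(l:ℝ)*(ℙ (D j)).toReal) :=
              Finset.sum_le_sum hinner
          _ = Real.exp 4 * S^2 + 2*(l:ℝ)*S := by
              rw [Finset.sum_add_distrib, ← Finset.sum_mul, ← Finset.mul_sum, ← Finset.mul_sum,
                ← hS]
              ring
      have hP_lb : (Real.exp 4 + 1)⁻¹ ≤ (ℙ (⋃ k ∈ F, D k)).toReal := by
        have h1 : S^2 ≤ (ℙ (⋃ k ∈ F, D k)).toReal * (Real.exp 4 * S^2 + 2*(l:ℝ)*S) :=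
          le_trans hce (mul_le_mul_of_nonneg_left hdouble ENNReal.toReal_nonneg)
        have h2 : Real.exp 4 * S^2 + 2*(l:ℝ)*S ≤ (Real.exp 4 + 1) * S^2 := by nlinarith
        have h3 : (0:ℝ) < Real.exp 4 + 1 := by positivity
        have h4 : (0:ℝ) ≤ (ℙ (⋃ k ∈ F, D k)).toReal := ENNReal.toReal_nonneg
        have h6 : 1 ≤ (ℙ (⋃ k ∈ F, D k)).toReal * (Real.exp 4 + 1) := by
          nlinarith [pow_pos hS_pos 2]
        calc (Real.exp 4 + 1)⁻¹ = (Real.exp 4 + 1)⁻¹ * 1 := by ring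
          _ ≤ (Real.exp 4 + 1)⁻¹ * ((ℙ (⋃ k ∈ F, D k)).toReal * (Real.exp 4 + 1)) :=
              mul_le_mul_of_nonneg_left h6 (by positivity)
          _ = (ℙ (⋃ k ∈ F, D k)).toReal * ((Real.exp 4 + 1)⁻¹ * (Real.exp 4 + 1)) := by ring
          _ = (ℙ (⋃ k ∈ F, D k)).toReal := by
              rw [inv_mul_cancel₀ (ne_of_gt h3), mul_one]
      have hUV : (⋃ k ∈ F, D k) ⊆ ⋃ n', ⋃ (_ : N ≤ n'), D n' := by
        intro ω hω
        simp only [Set.mem_iUnion] at hω ⊢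
        obtain ⟨k, hk, hωk⟩ := hω
        rw [hF, Finset.mem_filter, Finset.mem_Ico] at hk
        exact ⟨k, hk.1.1, hωk⟩
      exact ENNReal.ofReal_le_of_le_toReal (le_trans hP_lb
        (ENNReal.toReal_mono (measure_ne_top _ _) (measure_mono hUV)))
    -- pass to the limit
    have hlimD_eq : limsup D atTop = ⋂ N, ⋃ n, ⋃ (_ : N ≤ n), D n := by
      rw [limsup_eq_iInf_iSup_of_nat]
      rfl
    have htend := tendsto_measure_iInter_atTop (μ := (ℙ : Measure Ω))
      (fun N => (hVmeas N).nullMeasurableSet) hVanti ⟨0, measure_ne_top _ _⟩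
    have hlimD_lb : ENNReal.ofReal ((Real.exp 4 + 1)⁻¹) ≤ ℙ (limsup D atTop) := by
      rw [hlimD_eq]
      refine ge_of_tendsto htend ?_
      filter_upwards [eventually_ge_atTop N₀] with N hN using hVlb N hN
    have hA_pos : ℙ (limsup A atTop) ≠ 0 := by
      intro h0
      have h1 : ℙ (limsup D atTop) ≤ ℙ (limsup A atTop) := measure_mono hDA
      rw [h0, le_zero_iff] at h1
      have h2 : (0:ℝ) < (Real.exp 4 + 1)⁻¹ := by positivity
      have h3 := lt_of_lt_of_le (ENNReal.ofReal_pos.2 h2) hlimD_lb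
      rw [h1] at h3
      exact lt_irrefl _ h3
    rcases hzeroone with h | h
    · exact absurd h hA_pos
    · exact h
  exact ⟨convPart, divPart⟩
end

section
/- Let ξ, ξ_1, ξ_2, … be i.i.d. random variables and (u_n) a nondecreasing real sequence. If P(ξ > u_n) → 0 and liminf_{n→∞} n·P(ξ > u_n) < ∞, then P(max_{1≤i≤n} ξ_i ≤ u_n infinitely often) = 1. -/
open MeasureTheory ProbabilityTheory Filter

lemma exp_neg_two_mul_le {p : ℝ} (h0 : 0 ≤ p) (h2 : p ≤ 1/2) :
    Real.exp (-(2 * p)) ≤ 1 - p := by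
  have h1 : (1:ℝ) + 2 * p ≤ Real.exp (2 * p) := by
    have := Real.add_one_le_exp (2 * p); linarith
  have hpos : (0:ℝ) < 1 + 2 * p := by linarith
  rw [Real.exp_neg]
  have step1 : (Real.exp (2 * p))⁻¹ ≤ (1 + 2 * p)⁻¹ := by
    gcongr
  refine step1.trans ?_
  rw [← one_div, div_le_iff₀ hpos]
  nlinarith

/-- Part of Klass's lemma: if `(uₙ)` is nondecreasing, `P(ξ > uₙ) → 0` and
`liminf n·P(ξ > uₙ) < ∞`, then `P(max_{1≤i≤n} ξᵢ ≤ uₙ  i.o.) = 1`. -/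
theorem klass_io_one {Ω : Type*} [MeasureSpace Ω]
    [IsProbabilityMeasure (ℙ : Measure Ω)] (ξ : ℕ → Ω → ℝ)
    (hmeas : ∀ i, Measurable (ξ i))
    (hindep : iIndepFun ξ ℙ)
    (hident : ∀ i, IdentDistrib (ξ i) (ξ 0) ℙ ℙ)
    (u : ℕ → ℝ) (hu : Monotone u)
    (h0 : Tendsto (fun n : ℕ => ℙ {ω | u n < ξ 0 ω}) atTop (nhds 0))
    (hfin : liminf (fun n : ℕ => (n : ENNReal) * ℙ {ω | u n < ξ 0 ω}) atTop < ⊤) :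
    ℙ (limsup (fun n => {ω | ∀ i < n, ξ i ω ≤ u n}) atTop) = 1 := by
  classical
  set p : ℕ → ENNReal := fun n => ℙ {ω | u n < ξ 0 ω} with hp
  have h0p : Tendsto p atTop (nhds 0) := by simpa only [hp] using h0
  have hfinp : liminf (fun n : ℕ => (n : ENNReal) * p n) atTop < ⊤ := by
    simpa only [hp] using hfin
  have hpmeas : ∀ i n, MeasurableSet {ω : Ω | u n < ξ i ω} := fun i n =>
    measurableSet_lt measurable_const (hmeas i)
  have hIoi : ∀ i n, ℙ {ω : Ω | u n < ξ i ω} = p n := by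
    intro i n
    have h := (hident i).measure_mem_eq (measurableSet_Ioi (a := u n))
    simp only [hp]
    exact h
  set q : ℕ → ENNReal := fun n => ℙ ((ξ 0) ⁻¹' Set.Iic (u n)) with hqdef
  have hqi : ∀ i n, ℙ ((ξ i) ⁻¹' Set.Iic (u n)) = q n := fun i n =>
    (hident i).measure_mem_eq measurableSet_Iic
  have hptop : ∀ n, p n ≠ ⊤ := fun n => measure_ne_top _ _
  have hq_eq : ∀ n, q n = 1 - p n := by
    intro n
    have hcompl : (ξ 0) ⁻¹' Set.Iic (u n) = {ω : Ω | u n < ξ 0 ω}ᶜ := by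
      ext ω; simp [not_lt]
    simp only [hqdef, hp]
    rw [hcompl, measure_compl (hpmeas 0 n) (measure_ne_top _ _), measure_univ]
  -- the blocks of events
  set B : ℕ → ℕ → Set Ω := fun m n => ⋂ i ∈ Finset.Ico m n, (ξ i) ⁻¹' Set.Iic (u n) with hB
  have hBmem : ∀ m n (ω : Ω), ω ∈ B m n ↔ ∀ i, m ≤ i → i < n → ξ i ω ≤ u n := by
    intro m n ω
    simp [hB, Finset.mem_Ico, and_imp]
  have hBmeas : ∀ m n, MeasurableSet (B m n) := fun m n =>
    MeasurableSet.iInter fun i => MeasurableSet.iInter fun _ => (hmeas i) measurableSet_Iic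
  have hAB : ∀ n, {ω : Ω | ∀ i < n, ξ i ω ≤ u n} = B 0 n := by
    intro n
    ext ω
    rw [Set.mem_setOf_eq, hBmem]
    exact ⟨fun h i _ hi => h i hi, fun h i hi => h i (Nat.zero_le i) hi⟩
  -- probability of B 0 n
  have hPB : ∀ n, ℙ (B 0 n) = q n ^ n := by
    intro n
    have h := hindep.measure_inter_preimage_eq_mul (Finset.Ico 0 n)
      (sets := fun _ => Set.Iic (u n)) (fun i _ => measurableSet_Iic)
    simp only [hB]
    rw [h]
    calc ∏ i ∈ Finset.Ico 0 n, ℙ (ξ i ⁻¹' Set.Iic (u n))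
        = ∏ _i ∈ Finset.Ico 0 n, q n := Finset.prod_congr rfl fun i _ => hqi i n
      _ = q n ^ n := by rw [Finset.prod_const, Nat.card_Ico, Nat.sub_zero]
  -- null bad sets
  have hnull : ∀ i, ℙ (⋂ k, {ω : Ω | u k < ξ i ω}) = 0 := by
    intro i
    have hle : ∀ n, ℙ (⋂ k, {ω : Ω | u k < ξ i ω}) ≤ p n := fun n =>
      (measure_mono (Set.iInter_subset _ n)).trans (le_of_eq (hIoi i n))
    exact le_zero_iff.mp (ge_of_tendsto' h0p hle)
  -- the constant C and δ
  set C : ENNReal := liminf (fun n : ℕ => (n : ENNReal) * p n) atTop + 1 with hC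
  have hCtop : C < ⊤ := ENNReal.add_lt_top.mpr ⟨hfinp, ENNReal.one_lt_top⟩
  have hCfreq : ∃ᶠ n : ℕ in atTop, (n : ENNReal) * p n < C :=
    frequently_lt_of_liminf_lt (by isBoundedDefault)
      (ENNReal.lt_add_right hfinp.ne one_ne_zero)
  have h0r : Tendsto (fun n => (p n).toReal) atTop (nhds 0) := by
    have := (ENNReal.tendsto_toReal (ENNReal.zero_ne_top)).comp h0p
    simpa [Function.comp_def] using this
  have hev : ∀ᶠ n in atTop, (p n).toReal < 1/2 :=
    h0r.eventually (gt_mem_nhds (by norm_num))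
  set δ : ENNReal := ENNReal.ofReal (Real.exp (-(2 * C.toReal))) with hδ
  have hδpos : 0 < δ := ENNReal.ofReal_pos.mpr (Real.exp_pos _)
  -- frequently ℙ (B 0 n) ≥ δ
  have hfreqA : ∃ᶠ n in atTop, δ ≤ ℙ (B 0 n) := by
    refine (hCfreq.and_eventually hev).mono ?_
    rintro n ⟨h1, h2⟩
    have hpr0 : 0 ≤ (p n).toReal := ENNReal.toReal_nonneg
    have hnpr : (n : ℝ) * (p n).toReal ≤ C.toReal := by
      have := ENNReal.toReal_mono hCtop.ne h1.le
      rwa [ENNReal.toReal_mul, ENNReal.toReal_natCast] at this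
    have hq_of : q n = ENNReal.ofReal (1 - (p n).toReal) := by
      rw [hq_eq n, ENNReal.ofReal_sub 1 ENNReal.toReal_nonneg, ENNReal.ofReal_one,
        ENNReal.ofReal_toReal (hptop n)]
    have hpow : ℙ (B 0 n) = ENNReal.ofReal ((1 - (p n).toReal) ^ n) := by
      rw [hPB n, hq_of, ENNReal.ofReal_pow (by linarith)]
    rw [hpow, hδ]
    apply ENNReal.ofReal_le_ofReal
    have e1 : Real.exp (-(2 * C.toReal)) ≤ Real.exp (-(2 * ((n : ℝ) * (p n).toReal))) :=
      Real.exp_le_exp.mpr (by nlinarith)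
    refine e1.trans ?_
    have e2 : Real.exp (-(2 * ((n : ℝ) * (p n).toReal)))
        = Real.exp (-(2 * (p n).toReal)) ^ n := by
      rw [← Real.exp_nat_mul]; congr 1; ring
    rw [e2]
    exact pow_le_pow_left₀ (Real.exp_pos _).le (exp_neg_two_mul_le hpr0 h2.le) n
  -- Fatou-type lower bound
  have hFatou : δ ≤ ℙ (limsup (fun n => B 0 n) atTop) := by
    rw [limsup_eq_iInf_iSup_of_nat]
    simp only [Set.iInf_eq_iInter, Set.iSup_eq_iUnion]
    have hanti : Antitone (fun n => ⋃ i, ⋃ _ : n ≤ i, B 0 i) := by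
      intro a b hab x hx
      simp only [Set.mem_iUnion] at hx ⊢
      obtain ⟨i, hi, h⟩ := hx
      exact ⟨i, hab.trans hi, h⟩
    rw [hanti.measure_iInter
      (fun n => (MeasurableSet.iUnion fun i =>
        MeasurableSet.iUnion fun _ => hBmeas 0 i).nullMeasurableSet)
      ⟨0, measure_ne_top _ _⟩]
    refine le_iInf fun n => ?_
    obtain ⟨k, hk, hδk⟩ := (frequently_atTop.mp hfreqA) n
    exact hδk.trans (measure_mono (Set.subset_iUnion₂ (s := fun i _ => B 0 i) k hk))
  -- monotonicity of the limsup in m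
  have hBmono : ∀ {m m' : ℕ}, m ≤ m' → ∀ n, B m n ⊆ B m' n := by
    intro m m' h n ω hω
    rw [hBmem] at hω ⊢
    exact fun i hi hin => hω i (h.trans hi) hin
  have hlimsupmono : ∀ {m m' : ℕ}, m ≤ m' →
      limsup (fun n => B m n) atTop ⊆ limsup (fun n => B m' n) atTop := by
    intro m m' h
    exact limsup_le_limsup (Eventually.of_forall fun n => hBmono h n)
  -- the tail event T
  set T : Set Ω := ⋃ m, limsup (fun n => B m n) atTop with hT
  have hsubT : limsup (fun n => B 0 n) atTop ⊆ T :=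
    Set.subset_iUnion (fun m => limsup (fun n => B m n) atTop) 0
  have hTsub : T ⊆ limsup (fun n => B 0 n) atTop ∪ ⋃ i, ⋂ k, {ω : Ω | u k < ξ i ω} := by
    intro ω hω
    by_cases hbad : ω ∈ ⋃ i, ⋂ k, {ω : Ω | u k < ξ i ω}
    · exact Or.inr hbad
    refine Or.inl ?_
    simp only [Set.mem_iUnion, Set.mem_iInter, Set.mem_setOf_eq, not_exists, not_forall,
      not_lt] at hbad
    choose g hg using hbad
    obtain ⟨m, hm⟩ := Set.mem_iUnion.mp hω
    rw [mem_limsup_iff_frequently_mem, frequently_atTop] at hm ⊢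
    intro M
    obtain ⟨n, hn, hBn⟩ := hm (max M ((Finset.range m).sup g))
    refine ⟨n, le_trans (le_max_left _ _) hn, ?_⟩
    rw [hBmem] at hBn ⊢
    intro i _ hin
    by_cases him : m ≤ i
    · exact hBn i him hin
    · push_neg at him
      have hgi : g i ≤ (Finset.range m).sup g := Finset.le_sup (Finset.mem_range.mpr him)
      exact le_trans (hg i) (hu (hgi.trans (le_trans (le_max_right _ _) hn)))
  have hPT : ℙ T = ℙ (limsup (fun n => B 0 n) atTop) := by
    refine le_antisymm ?_ (measure_mono hsubT)
    calc ℙ T ≤ ℙ (limsup (fun n => B 0 n) atTop ∪ ⋃ i, ⋂ k, {ω : Ω | u k < ξ i ω}) :=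
          measure_mono hTsub
      _ ≤ ℙ (limsup (fun n => B 0 n) atTop) + ℙ (⋃ i, ⋂ k, {ω : Ω | u k < ξ i ω}) :=
          measure_union_le _ _
      _ = ℙ (limsup (fun n => B 0 n) atTop) := by
          rw [measure_iUnion_null (fun i => hnull i), add_zero]
  -- T is a tail event
  have htail : MeasurableSet[limsup (fun i => MeasurableSpace.comap (ξ i) inferInstance)
      atTop] T := by
    rw [limsup_eq_iInf_iSup_of_nat, MeasurableSpace.measurableSet_iInf]
    intro n
    have hTn : T = ⋃ m, limsup (fun k => B (m + n) k) atTop := by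
      apply Set.Subset.antisymm
      · refine Set.iUnion_subset fun m => ?_
        exact (hlimsupmono (Nat.le_add_right m n)).trans (Set.subset_iUnion (fun m' => limsup (fun k => B (m' + n) k) atTop) m)
      · refine Set.iUnion_subset fun m => ?_
        exact Set.subset_iUnion (fun m' => limsup (fun k => B m' k) atTop) (m + n)
    rw [hTn]
    set M : MeasurableSpace Ω := ⨆ i, ⨆ _ : i ≥ n, MeasurableSpace.comap (ξ i) inferInstance
      with hM
    refine @MeasurableSet.iUnion Ω ℕ M _ _ fun m => ?_
    refine @MeasurableSet.measurableSet_limsup Ω M _ fun k => ?_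
    refine @MeasurableSet.iInter Ω ℕ M _ _ fun i => ?_
    refine @MeasurableSet.iInter Ω _ M _ _ fun hi => ?_
    have hin : i ≥ n := le_trans (Nat.le_add_left n m) (Finset.mem_Ico.mp hi).1
    have hle : MeasurableSpace.comap (ξ i) inferInstance ≤ M :=
      hM ▸ le_iSup₂ (f := fun i (_ : i ≥ n) => MeasurableSpace.comap (ξ i) inferInstance) i hin
    exact hle _ (MeasurableSpace.measurableSet_comap.mpr ⟨Set.Iic (u k), measurableSet_Iic, rfl⟩)
  -- Kolmogorov 0-1 law
  have h01 : ℙ T = 0 ∨ ℙ T = 1 :=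
    ProbabilityTheory.measure_zero_or_one_of_measurableSet_limsup_atTop
      (fun i => (hmeas i).comap_le) hindep htail
  have hδT : δ ≤ ℙ T := hPT ▸ hFatou
  have hone : ℙ T = 1 := h01.resolve_left fun h => (hδpos.not_ge (h ▸ hδT)).elim
  have hfun : (fun n => {ω : Ω | ∀ i < n, ξ i ω ≤ u n}) = fun n => B 0 n := funext hAB
  rw [hfun, ← hPT, hone]
end
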